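/- arXiv:math/0111192 — 3 statements merged into one kernel-verified Lean document; each statement's English description precedes it below -/
import Mathlib

section
/- For every integer k ≥ 1, the k-split polynomials {G_λ^{(k)}}, indexed by the k-bounded partitions λ, form a basis of the vector space Λ^{(k)}. -/
open scoped BigOperators Classical

noncomputable section

/-- Model of the ring of symmetric functions `Λ = ℚ[h₁,h₂,…]`: the polynomial
ring on the (algebraically independent) complete homogeneous generators. -/
abbrev SymFn : Type := MvPolynomial ℕ ℚ

/-- The complete homogeneous symmetric function `h_r` (`h_0 = 1`). -/
def hh : ℕ → SymFn
  | 0 => 1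
  | r + 1 => MvPolynomial.X r

/-- `h_n` for an integer index, with `h_n = 0` for `n < 0`. -/
def hZ (n : ℤ) : SymFn := if n < 0 then 0 else hh n.toNat

/-- `h_λ = h_{λ₁} h_{λ₂} ⋯`. -/
def hProd (l : List ℕ) : SymFn := (l.map hh).prod

/-- The Schur function via the Jacobi–Trudi determinant
`s_λ = det(h_{λ_i - i + j})_{1 ≤ i,j ≤ ℓ(λ)}`. -/
def schur (l : List ℕ) : SymFn :=
  Matrix.det (Matrix.of fun i j : Fin l.length =>
    hZ (((l.get i : ℕ) : ℤ) - ((i : ℕ) : ℤ) + ((j : ℕ) : ℤ)))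

/-- A partition: a weakly decreasing list of positive integers. -/
def IsPartition (l : List ℕ) : Prop := l.Pairwise (· ≥ ·) ∧ ∀ x ∈ l, 0 < x

/-- A `k`-bounded partition: all parts at most `k`. -/
def KBounded (k : ℕ) (l : List ℕ) : Prop := ∀ x ∈ l, x ≤ k

/-- The main hook-length `h_M(λ) = λ₁ + ℓ(λ) - 1`. -/
def mainHook (l : List ℕ) : ℕ := l.headI + l.length - 1

/-- Dominance order: `Dominates μ λ` means `μ ≥ λ`, i.e.
`λ₁ + ⋯ + λ_i ≤ μ₁ + ⋯ + μ_i` for all `i`. -/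
def Dominates (mu lam : List ℕ) : Prop := ∀ i : ℕ, (lam.take i).sum ≤ (mu.take i).sum

/-- Auxiliary function (with fuel) computing the `k`-split of a partition:
successive blocks of main hook-length exactly `k` (the last block having
main hook-length at most `k`). -/
def kSplitAux (k : ℕ) : ℕ → List ℕ → List (List ℕ)
  | _, [] => []
  | 0, l => [l]
  | fuel + 1, a :: rest =>
    if (a :: rest).length ≤ k + 1 - a ∨ k + 1 - a = 0 then [a :: rest]
    else (a :: rest).take (k + 1 - a) :: kSplitAux k fuel ((a :: rest).drop (k + 1 - a))

/-- The `k`-split `λ^{→k}` of a `k`-bounded partition `λ`. -/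
def kSplit (k : ℕ) (l : List ℕ) : List (List ℕ) := kSplitAux k l.length l

/-- The `k`-split polynomial `G_λ^{(k)} = s_{λ^{(1)}} s_{λ^{(2)}} ⋯ s_{λ^{(r)}}`. -/
def Gk (k : ℕ) (l : List ℕ) : SymFn := ((kSplit k l).map schur).prod

/-- `Λ^{(k)}`: the linear span of the `h_λ` over `k`-bounded partitions `λ`. -/
def LamK (k : ℕ) : Submodule ℚ SymFn :=
  Submodule.span ℚ {f : SymFn | ∃ l : List ℕ, IsPartition l ∧ KBounded k l ∧ f = hProd l}

namespace KSP
open MvPolynomial Finset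

/-- exponent finsupp of `h_a` as a monomial of `SymFn`. -/
def eexp : ℕ → (ℕ →₀ ℕ)
  | 0 => 0
  | a + 1 => Finsupp.single a 1

lemma hh_eq (a : ℕ) : hh a = monomial (eexp a) 1 := by
  cases a with
  | zero => simp [hh, eexp]
  | succ a => rw [hh, eexp, X, monomial_eq_monomial_iff]; left; simp

lemma eexp_apply (a b : ℕ) : eexp a b = if a = b + 1 then 1 else 0 := by
  cases a with
  | zero => simp [eexp]
  | succ a =>
    simp only [eexp, Finsupp.single_apply]
    by_cases h : a = b <;> simp [h]

/-- weighted degree: variable `i` has weight `i+1`. -/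
def wdeg (d : ℕ →₀ ℕ) : ℕ := (d.toMultiset.map (· + 1)).sum

lemma wdeg_add (d e : ℕ →₀ ℕ) : wdeg (d + e) = wdeg d + wdeg e := by
  simp [wdeg, Finsupp.toMultiset_add]

lemma wdeg_zero : wdeg 0 = 0 := by simp [wdeg]

lemma wdeg_eexp (a : ℕ) : wdeg (eexp a) = a := by
  cases a with
  | zero => simp [eexp, wdeg]
  | succ a => simp [eexp, wdeg, Finsupp.toMultiset_single]

lemma wdeg_sum {α : Type*} (s : Finset α) (g : α → (ℕ →₀ ℕ)) :
    wdeg (∑ i ∈ s, g i) = ∑ i ∈ s, wdeg (g i) := by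
  classical
  induction s using Finset.induction with
  | empty => simp [wdeg_zero]
  | insert _ _ h ih => rw [Finset.sum_insert h, Finset.sum_insert h, wdeg_add, ih]

lemma coord_le_wdeg (d : ℕ →₀ ℕ) (i : ℕ) : d i ≤ wdeg d := by
  classical
  calc d i = Multiset.count i d.toMultiset := (Finsupp.count_toMultiset d i).symm
  _ ≤ Multiset.card d.toMultiset := Multiset.count_le_card i _
  _ ≤ wdeg d := by
      rw [wdeg]
      have : (d.toMultiset.map (· + 1)).sum
          = (d.toMultiset.map id).sum + (d.toMultiset.map (fun _ => 1)).sum :=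
        Multiset.sum_map_add
      rw [this]
      simp

/-- The strict "reverse lexicographic" order on exponents: larger at the
largest differing variable. -/
def Rlt (d e : ℕ →₀ ℕ) : Prop := ∃ j, (∀ i, j < i → d i = e i) ∧ d j < e j

lemma Rlt.trans {d e f : ℕ →₀ ℕ} (h1 : Rlt d e) (h2 : Rlt e f) : Rlt d f := by
  obtain ⟨j1, h1a, h1b⟩ := h1
  obtain ⟨j2, h2a, h2b⟩ := h2
  rcases lt_trichotomy j1 j2 with h | h | h
  · exact ⟨j2, fun i hi => (h1a i (h.trans hi)).trans (h2a i hi), by rw [h1a j2 h]; exact h2b⟩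
  · exact ⟨j1, fun i hi => (h1a i hi).trans (h2a i (h ▸ hi)), h1b.trans_le (by subst h; omega)⟩
  · exact ⟨j1, fun i hi => (h1a i hi).trans (h2a i (h.trans hi)), by rw [← h2a j1 h]; exact h1b⟩

lemma Rlt.irrefl (d : ℕ →₀ ℕ) : ¬ Rlt d d := by
  rintro ⟨j, -, hj⟩; omega

lemma Rlt.add_right {d e : ℕ →₀ ℕ} (c : ℕ →₀ ℕ) (h : Rlt d e) : Rlt (d + c) (e + c) := by
  obtain ⟨j, ha, hb⟩ := h
  exact ⟨j, fun i hi => by simp [ha i hi], by simp; omega⟩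

lemma Rlt.add {d e d' e' : ℕ →₀ ℕ} (h : Rlt d e) (h' : Rlt d' e') : Rlt (d + d') (e + e') :=
  (h.add_right d').trans (by rw [add_comm e d', add_comm e e']; exact h'.add_right e)

lemma exists_Rlt_minimal (s : Finset (ℕ →₀ ℕ)) (hs : s.Nonempty) :
    ∃ d ∈ s, ∀ e ∈ s, ¬ Rlt e d := by
  classical
  induction s using Finset.induction with
  | empty => simp at hs
  | @insert a t ha ih =>
    rcases t.eq_empty_or_nonempty with rfl | ht
    · refine ⟨a, by simp, ?_⟩
      intro e he
      rcases Finset.mem_insert.1 he with rfl | he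
      · exact Rlt.irrefl _
      · simp at he
    · obtain ⟨m, hm, hmin⟩ := ih ht
      by_cases hram : Rlt a m
      · refine ⟨a, by simp, ?_⟩
        intro e he
        rcases Finset.mem_insert.1 he with rfl | he
        · exact Rlt.irrefl _
        · intro hea; exact hmin e he (hea.trans hram)
      · refine ⟨m, Finset.mem_insert_of_mem hm, ?_⟩
        intro e he
        rcases Finset.mem_insert.1 he with rfl | he
        · exact hram
        · exact hmin e he

end KSP
namespace KSP
open MvPolynomial Finset

section Core
variable {n : ℕ}

/-- number of entries of `x` that are `≥ v`. -/
def cnt (x : Fin n → ℕ) (v : ℕ) : ℕ := (univ.filter (fun i => v ≤ x i)).card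

/-- `∑ i (x i - v)⁺`. -/
def fsum (x : Fin n → ℕ) (v : ℕ) : ℕ := ∑ i, (x i - v)

lemma cnt_eq_sum (x : Fin n → ℕ) (v : ℕ) :
    cnt x v = ∑ i, (if v ≤ x i then 1 else 0) := by
  rw [cnt, Finset.card_filter]

lemma fsum_succ (x : Fin n → ℕ) (v : ℕ) : fsum x v = fsum x (v+1) + cnt x (v+1) := by
  rw [fsum, fsum, cnt_eq_sum, ← Finset.sum_add_distrib]
  refine Finset.sum_congr rfl fun i _ => ?_
  split <;> omega

lemma sum_eexp_apply (x : Fin n → ℕ) (b : ℕ) :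
    (∑ i, eexp (x i)) b + cnt x (b+2) = cnt x (b+1) := by
  classical
  have h1 : (∑ i, eexp (x i)) b = ∑ i, (if x i = b + 1 then 1 else 0) := by
    rw [Finsupp.finset_sum_apply]
    exact Finset.sum_congr rfl fun i _ => eexp_apply _ _
  rw [h1, cnt_eq_sum, cnt_eq_sum, ← Finset.sum_add_distrib]
  refine Finset.sum_congr rfl fun i _ => ?_
  split_ifs <;> omega

lemma wdeg_sum_eexp (x : Fin n → ℕ) : wdeg (∑ i, eexp (x i)) = ∑ i, x i := by
  rw [wdeg_sum]
  exact Finset.sum_congr rfl fun i _ => wdeg_eexp _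

/-- sum of the `m` smallest naturals is at most the sum over any `m`-element
finset of naturals. -/
lemma sum_range_le_sum : ∀ (m : ℕ) (S : Finset ℕ), S.card = m →
    ∑ j ∈ range m, j ≤ ∑ x ∈ S, x := by
  intro m
  induction m with
  | zero => intro S h; simp
  | succ m ih =>
    intro S hS
    have hSne : S.Nonempty := by
      rw [← Finset.card_pos, hS]; omega
    set M := S.max' hSne with hM
    have hMS : M ∈ S := S.max'_mem hSne
    have hsub : S ⊆ range (M + 1) := by
      intro x hx
      rw [Finset.mem_range]
      exact Nat.lt_succ_of_le (S.le_max' x hx)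
    have hcard : m + 1 ≤ M + 1 := by
      rw [← hS]
      simpa using Finset.card_le_card hsub
    have herase : (S.erase M).card = m := by
      rw [Finset.card_erase_of_mem hMS, hS]; omega
    have := ih (S.erase M) herase
    have hsum : ∑ x ∈ S.erase M, x + M = ∑ x ∈ S, x :=
      Finset.sum_erase_add _ _ hMS
    rw [Finset.sum_range_succ, ← hsum]
    omega

/-- sum of indices over a down-closed set is at most the sum of the images
under a permutation. -/
lemma perm_sum_ge (τ : Equiv.Perm (Fin n)) (J : Finset (Fin n))
    (hJ : ∀ i j : Fin n, i ≤ j → j ∈ J → i ∈ J) :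
    ∑ i ∈ J, ((i : ℕ) : ℤ) ≤ ∑ i ∈ J, ((τ i : ℕ) : ℤ) := by
  classical
  have hmem : ∀ i ∈ J, (i : ℕ) < J.card := by
    intro i hi
    let g : Fin ((i : ℕ) + 1) → Fin n :=
      fun j => ⟨(j : ℕ), lt_of_le_of_lt (Nat.lt_succ_iff.1 j.isLt) i.isLt⟩
    have : (Finset.univ : Finset (Fin ((i : ℕ) + 1))).card ≤ J.card := by
      apply Finset.card_le_card_of_injOn g
      · intro j _
        exact hJ _ i (by simp [g, Fin.le_def]; exact Nat.lt_succ_iff.1 j.isLt) hi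
      · intro a _ b _ hab
        simpa [g, Fin.ext_iff] using hab
    simpa using this
  -- left sum over image in ℕ
  have hinj : Set.InjOn (fun i : Fin n => (i : ℕ)) J := fun a _ b _ h => Fin.ext h
  have hL : ∑ i ∈ J, ((i : ℕ) : ℤ) = ∑ x ∈ J.image (fun i : Fin n => (i : ℕ)), (x : ℤ) := by
    rw [Finset.sum_image (fun a ha b hb h => hinj ha hb h)]
  have hinj2 : Set.InjOn (fun i : Fin n => ((τ i : Fin n) : ℕ)) J := by
    intro a _ b _ h
    exact τ.injective (Fin.ext h)
  have hR : ∑ i ∈ J, ((τ i : ℕ) : ℤ) = ∑ x ∈ J.image (fun i : Fin n => ((τ i : Fin n) : ℕ)), (x : ℤ) := by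
    rw [Finset.sum_image (fun a ha b hb h => hinj2 ha hb h)]
  rw [hL, hR]
  have hcard2 : (J.image (fun i : Fin n => ((τ i : Fin n) : ℕ))).card = J.card :=
    Finset.card_image_of_injOn hinj2
  have key1 : ∑ x ∈ J.image (fun i : Fin n => (i : ℕ)), (x : ℤ)
      ≤ ∑ j ∈ range J.card, (j : ℤ) := by
    apply Finset.sum_le_sum_of_subset_of_nonneg
    · intro x hx
      rw [Finset.mem_image] at hx
      obtain ⟨i, hi, rfl⟩ := hx
      rw [Finset.mem_range]
      exact hmem i hi
    · intro x _ _
      positivity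
  have key2 : ∑ j ∈ range J.card, j ≤ ∑ x ∈ J.image (fun i : Fin n => ((τ i : Fin n) : ℕ)), x :=
    sum_range_le_sum _ _ hcard2
  have key2' : (∑ j ∈ range J.card, (j:ℤ)) ≤ ∑ x ∈ J.image (fun i : Fin n => ((τ i : Fin n) : ℕ)), (x:ℤ) := by
    have h := (Nat.cast_le (α := ℤ)).2 key2
    rw [Nat.cast_sum, Nat.cast_sum] at h
    exact h
  exact key1.trans key2'

end Core
end KSP
namespace KSP
open MvPolynomial Finset

section Core2
variable {n : ℕ}

theorem core_sum (p t : Fin n → ℕ) (τ : Equiv.Perm (Fin n))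
    (ht : ∀ i : Fin n, (t i : ℤ) = (p i : ℤ) - ((i:ℕ) : ℤ) + ((τ i : ℕ) : ℤ)) :
    ∑ i, t i = ∑ i, p i := by
  have h : ((∑ i, t i : ℕ) : ℤ) = ((∑ i, p i : ℕ) : ℤ) := by
    rw [Nat.cast_sum, Nat.cast_sum]
    have h2 : ∑ i : Fin n, ((t i : ℕ) : ℤ)
        = ∑ i : Fin n, (((p i : ℕ) : ℤ) - ((i:ℕ) : ℤ) + ((τ i : ℕ) : ℤ)) :=
      Finset.sum_congr rfl fun i _ => ht i
    have h3 : ∑ i : Fin n, ((τ i : ℕ) : ℤ) = ∑ i : Fin n, ((i : ℕ) : ℤ) :=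
      Equiv.sum_comp τ (fun i : Fin n => ((i : ℕ) : ℤ))
    rw [h2]
    rw [Finset.sum_add_distrib, Finset.sum_sub_distrib]
    rw [h3]
    ring
  exact_mod_cast h

theorem core (p t : Fin n → ℕ) (hmono : ∀ i j : Fin n, i ≤ j → p j ≤ p i)
    (τ : Equiv.Perm (Fin n)) (hτ : τ ≠ 1)
    (ht : ∀ i : Fin n, (t i : ℤ) = (p i : ℤ) - ((i:ℕ) : ℤ) + ((τ i : ℕ) : ℤ)) :
    Rlt (∑ i, eexp (p i)) (∑ i, eexp (t i)) := by
  classical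
  set J : ℕ → Finset (Fin n) := fun v => univ.filter (fun i => v < p i) with hJdef
  have hJdown : ∀ v (i j : Fin n), i ≤ j → j ∈ J v → i ∈ J v := by
    intro v i j hij hj
    simp only [hJdef, Finset.mem_filter, Finset.mem_univ, true_and] at *
    exact lt_of_lt_of_le hj (hmono i j hij)
  set D : ℕ → ℤ := fun v => ∑ i ∈ J v, (((τ i : ℕ) : ℤ) - ((i:ℕ):ℤ)) with hDdef
  have hD0 : ∀ v, 0 ≤ D v := by
    intro v
    have h := perm_sum_ge τ (J v) (hJdown v)
    have : D v = ∑ i ∈ J v, ((τ i : ℕ) : ℤ) - ∑ i ∈ J v, ((i:ℕ):ℤ) := by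
      rw [hDdef]; exact Finset.sum_sub_distrib _ _
    linarith
  have hfp : ∀ v, (fsum p v : ℤ) = ∑ i ∈ J v, ((p i : ℤ) - (v:ℤ)) := by
    intro v
    have h1 : fsum p v = ∑ i ∈ J v, (p i - v) := by
      rw [fsum]
      refine (Finset.sum_subset (Finset.subset_univ (J v)) fun i _ hi => ?_).symm
      simp only [hJdef, Finset.mem_filter, Finset.mem_univ, true_and, not_lt] at hi
      omega
    rw [h1, Nat.cast_sum]
    refine Finset.sum_congr rfl fun i hi => ?_
    simp only [hJdef, Finset.mem_filter] at hi
    omega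
  have hkey : ∀ v, (fsum p v : ℤ) + D v ≤ ∑ i ∈ J v, ((t i - v : ℕ) : ℤ) := by
    intro v
    have h1 : ∑ i ∈ J v, ((t i:ℤ) - (v:ℤ)) ≤ ∑ i ∈ J v, ((t i - v : ℕ) : ℤ) :=
      Finset.sum_le_sum fun i _ => by omega
    have h2 : (fsum p v : ℤ) + D v = ∑ i ∈ J v, ((t i:ℤ) - (v:ℤ)) := by
      rw [hfp v, hDdef, ← Finset.sum_add_distrib]
      refine Finset.sum_congr rfl fun i _ => ?_
      rw [ht i]; ring
    linarith
  have hsub : ∀ v (s : Finset (Fin n)), ∑ i ∈ s, ((t i - v : ℕ) : ℤ) ≤ (fsum t v : ℤ) := by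
    intro v s
    rw [fsum, Nat.cast_sum]
    refine Finset.sum_le_sum_of_subset_of_nonneg (Finset.subset_univ s) fun i _ _ => by positivity
  have hA : ∀ v, fsum p v ≤ fsum t v := by
    intro v
    have h1 := hkey v
    have h2 := hsub v (J v)
    have h3 := hD0 v
    omega
  have hstrict : ∃ v, fsum p v < fsum t v := by
    by_cases hDpos : ∃ v, 0 < D v
    · obtain ⟨v, hv⟩ := hDpos
      have h1 := hkey v
      have h2 := hsub v (J v)
      exact ⟨v, by omega⟩
    · push_neg at hDpos
      have hDz : ∀ v, D v = 0 := fun v => le_antisymm (hDpos v) (hD0 v)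
      set M : Finset (Fin n) := univ.filter (fun i => τ i ≠ i) with hMdef
      have hMne : M.Nonempty := by
        rcases Finset.eq_empty_or_nonempty M with h | h
        · exfalso; apply hτ
          apply Equiv.ext
          intro i
          by_contra hi
          simp only [Equiv.Perm.one_apply] at hi
          have : i ∈ M := by simp [hMdef, hi]
          simp [h] at this
        · exact h
      set j0 : Fin n := M.min' hMne with hj0def
      have hj0M : τ j0 ≠ j0 := by
        have := M.min'_mem hMne
        simp only [hMdef, Finset.mem_filter] at this
        exact this.2
      have hfix : ∀ i : Fin n, i < j0 → τ i = i := by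
        intro i hi
        by_contra hne
        have : i ∈ M := by simp [hMdef, hne]
        exact absurd (M.min'_le i this) (not_le.2 hi)
      have hgt : j0 < τ j0 := by
        rcases lt_or_gt_of_ne hj0M with h | h
        · exfalso
          have := hfix (τ j0) h
          exact hj0M (τ.injective this)
        · exact h
      refine ⟨p j0, ?_⟩
      have hj0J : j0 ∉ J (p j0) := by simp [hJdef]
      have hins : ∑ i ∈ insert j0 (J (p j0)), ((t i - p j0 : ℕ) : ℤ)
          = ((t j0 - p j0 : ℕ) : ℤ) + ∑ i ∈ J (p j0), ((t i - p j0 : ℕ) : ℤ) :=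
        Finset.sum_insert hj0J
      have h2 := hsub (p j0) (insert j0 (J (p j0)))
      have h1 := hkey (p j0)
      have h4 : p j0 + 1 ≤ t j0 := by
        have h5 := ht j0
        have h6 : ((j0 : ℕ) : ℤ) < ((τ j0 : ℕ) : ℤ) := by exact_mod_cast hgt
        omega
      have h7 : (1:ℤ) ≤ ((t j0 - p j0 : ℕ) : ℤ) := by omega
      have h8 := hDz (p j0)
      omega
  -- Step C: build the Rlt witness
  obtain ⟨v0, hv0⟩ := hstrict
  have hbound : ∀ v, fsum p v < fsum t v → v < fsum t 0 + 1 := by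
    intro v hv
    by_contra hc
    push_neg at hc
    have : fsum t v = 0 := by
      rw [fsum]
      refine Finset.sum_eq_zero fun i _ => ?_
      have : t i ≤ fsum t 0 := by
        have h0 : t i - 0 ≤ fsum t 0 := Finset.single_le_sum (f := fun i => t i - 0)
          (fun i _ => Nat.zero_le _) (Finset.mem_univ i)
        omega
      omega
    omega
  set V : Finset ℕ := (range (fsum t 0 + 1)).filter (fun v => fsum p v < fsum t v) with hVdef
  have hv0V : v0 ∈ V := by
    simp only [hVdef, Finset.mem_filter, Finset.mem_range]
    exact ⟨hbound v0 hv0, hv0⟩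
  have hVne : V.Nonempty := ⟨v0, hv0V⟩
  set v' : ℕ := V.max' hVne with hv'def
  have hstar : fsum p v' < fsum t v' := by
    have := V.max'_mem hVne
    simp only [hVdef, Finset.mem_filter] at this
    exact this.2
  have habove : ∀ v, v' < v → fsum p v = fsum t v := by
    intro v hv
    refine le_antisymm (hA v) ?_
    by_contra hc
    push_neg at hc
    have hvV : v ∈ V := by
      simp only [hVdef, Finset.mem_filter, Finset.mem_range]
      exact ⟨hbound v hc, hc⟩
    exact absurd (V.le_max' v hvV) (not_le.2 hv)
  have hcnt_above : ∀ w, v' + 2 ≤ w → cnt p w = cnt t w := by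
    intro w hw
    obtain ⟨u, rfl⟩ : ∃ u, w = u + 1 := ⟨w - 1, by omega⟩
    have h1 := fsum_succ p u
    have h2 := fsum_succ t u
    have h3 := habove u (by omega)
    have h4 := habove (u+1) (by omega)
    omega
  have hcnt_star : cnt p (v' + 1) < cnt t (v' + 1) := by
    have h1 := fsum_succ p v'
    have h2 := fsum_succ t v'
    have h3 := habove (v' + 1) (by omega)
    omega
  refine ⟨v', fun b hb => ?_, ?_⟩
  · have h1 := sum_eexp_apply p b
    have h2 := sum_eexp_apply t b
    have h3 := hcnt_above (b+1) (by omega)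
    have h4 := hcnt_above (b+2) (by omega)
    omega
  · have h1 := sum_eexp_apply p v'
    have h2 := sum_eexp_apply t v'
    have h4 := hcnt_above (v'+2) (by omega)
    omega

end Core2
end KSP
namespace KSP
open MvPolynomial Finset

/-- leading exponent of `h_λ`. -/
def expOf (l : List ℕ) : ℕ →₀ ℕ := (l.map eexp).sum

lemma expOf_nil : expOf [] = 0 := rfl

lemma expOf_cons (a : ℕ) (l : List ℕ) : expOf (a :: l) = eexp a + expOf l := by
  simp [expOf]

lemma expOf_append (l l' : List ℕ) : expOf (l ++ l') = expOf l + expOf l' := by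
  simp [expOf]

lemma expOf_eq_sum_get (l : List ℕ) : expOf l = ∑ i : Fin l.length, eexp (l.get i) := by
  induction l with
  | nil => simp [expOf_nil]
  | cons a l ih =>
    rw [expOf_cons, ih]
    exact (Fin.sum_univ_succ (fun i : Fin (l.length + 1) => eexp ((a :: l).get i))).symm

lemma hProd_eq (l : List ℕ) : hProd l = monomial (expOf l) 1 := by
  induction l with
  | nil => simp [hProd, expOf_nil]
  | cons a l ih =>
    have : hProd (a :: l) = hh a * hProd l := by simp [hProd]
    rw [this, ih, hh_eq, monomial_mul, expOf_cons, one_mul]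

/-- remainder predicate: all monomials of `r` are strictly `Rlt`-above `d`
with the same weighted degree. -/
def GoodRem (d : ℕ →₀ ℕ) (r : SymFn) : Prop :=
  ∀ e ∈ r.support, Rlt d e ∧ wdeg e = wdeg d

lemma GoodRem.zero (d : ℕ →₀ ℕ) : GoodRem d 0 := by simp [GoodRem]

lemma GoodRem.add {d r r'} (h : GoodRem d r) (h' : GoodRem d r') : GoodRem d (r + r') := by
  intro e he
  have := Finsupp.support_add he
  rcases Finset.mem_union.1 this with h2 | h2
  · exact h e h2
  · exact h' e h2

lemma GoodRem.ofMonomial {d e : ℕ →₀ ℕ} (h : Rlt d e) (hw : wdeg e = wdeg d) (c : ℚ) :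
    GoodRem d (MvPolynomial.monomial e c) := by
  intro x hx
  have := MvPolynomial.support_monomial_subset hx
  simp only [Finset.mem_singleton] at this
  subst this
  exact ⟨h, hw⟩

lemma GoodRem.smul {d r} (c : ℚ) (h : GoodRem d r) : GoodRem d (c • r) := by
  intro e he
  exact h e (Finsupp.support_smul he)

lemma GoodRem.sum {α : Type*} {d : ℕ →₀ ℕ} (s : Finset α) (g : α → SymFn)
    (h : ∀ a ∈ s, GoodRem d (g a)) : GoodRem d (∑ a ∈ s, g a) := by
  classical
  induction s using Finset.induction with
  | empty => simpa using GoodRem.zero d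
  | @insert a t ha ih =>
    rw [Finset.sum_insert ha]
    exact (h a (Finset.mem_insert_self a t)).add
      (ih fun b hb => h b (Finset.mem_insert_of_mem hb))

lemma GoodRem.mul {d d' r r'} (h : GoodRem d r) (h' : GoodRem d' r') :
    GoodRem (d + d') (r * r') := by
  intro e he
  have := MvPolynomial.support_mul r r' he
  rw [Finset.mem_add] at this
  obtain ⟨a, ha, b, hb, rfl⟩ := this
  obtain ⟨h1, h2⟩ := h a ha
  obtain ⟨h3, h4⟩ := h' b hb
  exact ⟨h1.add h3, by rw [wdeg_add, wdeg_add, h2, h4]⟩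

lemma GoodRem.mul_monomial {d d' r} (h : GoodRem d r) (c : ℚ) :
    GoodRem (d + d') (r * MvPolynomial.monomial d' c) := by
  intro e he
  have := MvPolynomial.support_mul r (MvPolynomial.monomial d' c) he
  rw [Finset.mem_add] at this
  obtain ⟨a, ha, b, hb, rfl⟩ := this
  have hb' := MvPolynomial.support_monomial_subset hb
  simp only [Finset.mem_singleton] at hb'
  subst hb'
  obtain ⟨h1, h2⟩ := h a ha
  exact ⟨h1.add_right _, by rw [wdeg_add, wdeg_add, h2]⟩

lemma GoodRem.monomial_mul {d d' r} (h : GoodRem d' r) (c : ℚ) :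
    GoodRem (d + d') (MvPolynomial.monomial d c * r) := by
  rw [mul_comm, add_comm]
  exact h.mul_monomial c

/-- `f` has leading monomial `d` with coefficient 1, all other monomials
`Rlt`-above with the same weighted degree. -/
def IsLead (d : ℕ →₀ ℕ) (f : SymFn) : Prop :=
  ∃ r, f = monomial d 1 + r ∧ GoodRem d r

lemma IsLead.mul {d d' f g} (hf : IsLead d f) (hg : IsLead d' g) :
    IsLead (d + d') (f * g) := by
  obtain ⟨r, rfl, hr⟩ := hf
  obtain ⟨r', rfl, hr'⟩ := hg
  refine ⟨monomial d 1 * r' + r * monomial d' 1 + r * r', by ring_nf; rw [monomial_mul, one_mul]; ring, ?_⟩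
  exact ((hr'.monomial_mul 1).add (hr.mul_monomial 1)).add (hr.mul hr')

lemma IsLead.monomial (d : ℕ →₀ ℕ) : IsLead d (monomial d 1) :=
  ⟨0, by simp, GoodRem.zero d⟩

end KSP
namespace KSP
open MvPolynomial Finset

lemma prod_monomial {α : Type*} (s : Finset α) (g : α → (ℕ →₀ ℕ)) :
    (∏ i ∈ s, MvPolynomial.monomial (g i) (1:ℚ)) = MvPolynomial.monomial (∑ i ∈ s, g i) 1 := by
  classical
  induction s using Finset.induction with
  | empty => simp
  | @insert a t ha ih =>
    rw [Finset.prod_insert ha, Finset.sum_insert ha, ih, monomial_mul, one_mul]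

lemma hZ_nonneg {m : ℤ} (h : 0 ≤ m) : hZ m = hh m.toNat := by
  rw [hZ, if_neg (not_lt.2 h)]

lemma GoodRem.usmul {d r} (c : ℤˣ) (h : GoodRem d r) : GoodRem d (c • r) := by
  intro e he
  have hsub : (c • r).support ⊆ r.support := Finsupp.support_smul
  exact h e (hsub he)

lemma schur_lead (l : List ℕ) (hl : IsPartition l) : IsLead (expOf l) (schur l) := by
  classical
  have hmono : ∀ i j : Fin l.length, i ≤ j → l.get j ≤ l.get i := by
    intro i j hij
    rcases eq_or_lt_of_le hij with rfl | h
    · exact le_refl _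
    · exact (List.pairwise_iff_get.1 hl.1) i j h
  rw [schur, Matrix.det_apply]
  simp only [Matrix.of_apply]
  rw [← Finset.add_sum_erase _ _ (Finset.mem_univ (1 : Equiv.Perm (Fin l.length)))]
  have hid : (Equiv.Perm.sign (1 : Equiv.Perm (Fin l.length))) •
      (∏ i : Fin l.length, hZ (((l.get ((1 : Equiv.Perm (Fin l.length)) i) : ℕ) : ℤ)
        - (((1 : Equiv.Perm (Fin l.length)) i : ℕ) : ℤ) + ((i : ℕ) : ℤ)))
      = MvPolynomial.monomial (expOf l) 1 := by
    rw [map_one, one_smul]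
    have h1 : ∀ i : Fin l.length,
        hZ (((l.get ((1 : Equiv.Perm (Fin l.length)) i) : ℕ) : ℤ)
          - (((1 : Equiv.Perm (Fin l.length)) i : ℕ) : ℤ) + ((i : ℕ) : ℤ))
        = MvPolynomial.monomial (eexp (l.get i)) 1 := by
      intro i
      simp only [Equiv.Perm.one_apply]
      rw [show ((l.get i : ℕ) : ℤ) - ((i:ℕ):ℤ) + ((i:ℕ):ℤ) = ((l.get i : ℕ) : ℤ) by ring,
        hZ_nonneg (by positivity), Int.toNat_natCast, hh_eq]
    rw [Finset.prod_congr rfl (fun i _ => h1 i), prod_monomial, expOf_eq_sum_get]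
  rw [hid]
  refine ⟨_, rfl, ?_⟩
  apply GoodRem.sum
  intro σ hσ
  have hσ1 : σ ≠ 1 := (Finset.mem_erase.1 hσ).1
  by_cases hneg : ∃ i : Fin l.length,
      ((l.get (σ i) : ℕ) : ℤ) - ((σ i : ℕ) : ℤ) + ((i : ℕ) : ℤ) < 0
  · obtain ⟨i, hi⟩ := hneg
    have hz : (∏ i : Fin l.length, hZ (((l.get (σ i) : ℕ) : ℤ)
        - ((σ i : ℕ) : ℤ) + ((i : ℕ) : ℤ))) = 0 :=
      Finset.prod_eq_zero (Finset.mem_univ i) (by rw [hZ, if_pos hi])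
    rw [hz, smul_zero]
    exact GoodRem.zero _
  · push_neg at hneg
    set t : Fin l.length → ℕ :=
      fun j => (((l.get j : ℕ) : ℤ) - ((j : ℕ) : ℤ) + (((σ⁻¹ j : Fin l.length) : ℕ) : ℤ)).toNat
      with htdef
    have ht : ∀ j : Fin l.length,
        (t j : ℤ) = ((l.get j : ℕ) : ℤ) - ((j : ℕ) : ℤ) + (((σ⁻¹ j : Fin l.length) : ℕ) : ℤ) := by
      intro j
      rw [htdef]
      refine Int.toNat_of_nonneg ?_
      have := hneg (σ⁻¹ j)
      simpa [Equiv.Perm.inv_def] using this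
    have hfac : ∀ i : Fin l.length,
        hZ (((l.get (σ i) : ℕ) : ℤ) - ((σ i : ℕ) : ℤ) + ((i : ℕ) : ℤ)) = hh (t (σ i)) := by
      intro i
      rw [hZ_nonneg (hneg i)]
      congr 1
      rw [htdef]
      simp [Equiv.Perm.inv_def]
    rw [Finset.prod_congr rfl (fun i _ => hfac i)]
    rw [Equiv.prod_comp σ (fun j => hh (t j))]
    rw [Finset.prod_congr rfl (fun j _ => hh_eq (t j)), prod_monomial]
    have hcore := core (fun i => l.get i) t hmono σ⁻¹ (fun h => hσ1 (by
      rw [← inv_inv σ, h, inv_one])) ht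
    have hsum := core_sum (fun i => l.get i) t σ⁻¹ ht
    have hrlt : Rlt (expOf l) (∑ j, eexp (t j)) := by
      rw [expOf_eq_sum_get]; exact hcore
    have hwd : wdeg (∑ j, eexp (t j)) = wdeg (expOf l) := by
      rw [wdeg_sum_eexp, expOf_eq_sum_get, wdeg_sum_eexp, hsum]
    exact (GoodRem.ofMonomial hrlt hwd 1).usmul _
end KSP
namespace KSP
open MvPolynomial Finset

lemma sorted_get_le {l : List ℕ} (hl : l.Pairwise (· ≥ ·)) (i j : Fin l.length) (hij : i ≤ j) :
    l.get j ≤ l.get i := by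
  rcases eq_or_lt_of_le hij with rfl | h
  · exact le_refl _
  · exact (List.pairwise_iff_get.1 hl) i j h

lemma kSplitAux_props (k : ℕ) (hk : 1 ≤ k) : ∀ (fuel : ℕ) (l : List ℕ), l.length ≤ fuel →
    IsPartition l → KBounded k l →
    (kSplitAux k fuel l).flatten = l ∧
    ∀ b ∈ kSplitAux k fuel l, IsPartition b ∧ KBounded k b ∧ mainHook b ≤ k := by
  intro fuel
  induction fuel with
  | zero =>
    intro l hlen _ _
    have hl : l = [] := List.length_eq_zero_iff.1 (Nat.le_zero.1 hlen)
    subst hl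
    simp [kSplitAux]
  | succ fuel ih =>
    intro l hlen hpart hbd
    match l with
    | [] => simp [kSplitAux]
    | a :: rest =>
      have ha : 1 ≤ a := hpart.2 a (List.mem_cons_self)
      have hak : a ≤ k := hbd a (List.mem_cons_self)
      have hk1a : 1 ≤ k + 1 - a := by omega
      rw [kSplitAux]
      by_cases hc : (a :: rest).length ≤ k + 1 - a ∨ k + 1 - a = 0
      · rw [if_pos hc]
        refine ⟨by simp, ?_⟩
        intro b hb
        simp only [List.mem_singleton] at hb
        subst hb
        refine ⟨hpart, hbd, ?_⟩
        have hlen2 : (a :: rest).length ≤ k + 1 - a := by omega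
        rw [mainHook]
        simp only [List.headI]
        have : (a :: rest).length = rest.length + 1 := by simp
        omega
      · rw [if_neg hc]
        push_neg at hc
        have hlen2 : k + 1 - a < (a :: rest).length := hc.1
        have hsubT : (List.take (k+1-a) (a :: rest)).Sublist (a :: rest) := List.take_sublist _ _
        have hsubD : (List.drop (k+1-a) (a :: rest)).Sublist (a :: rest) := List.drop_sublist _ _
        have hpartD : IsPartition (List.drop (k+1-a) (a :: rest)) :=
          ⟨hpart.1.sublist hsubD, fun x hx => hpart.2 x (hsubD.subset hx)⟩
        have hbdD : KBounded k (List.drop (k+1-a) (a :: rest)) :=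
          fun x hx => hbd x (hsubD.subset hx)
        have hlenD : (List.drop (k+1-a) (a :: rest)).length ≤ fuel := by
          rw [List.length_drop]
          simp only [List.length_cons] at *
          omega
        obtain ⟨hjoin, hblocks⟩ := ih _ hlenD hpartD hbdD
        constructor
        · rw [List.flatten_cons, hjoin, List.take_append_drop]
        · intro b hb
          rcases List.mem_cons.1 hb with rfl | hb
          · refine ⟨⟨hpart.1.sublist hsubT, fun x hx => hpart.2 x (hsubT.subset hx)⟩,
              fun x hx => hbd x (hsubT.subset hx), ?_⟩
            obtain ⟨m, hm⟩ : ∃ m, k + 1 - a = m + 1 := ⟨k - a, by omega⟩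
            rw [mainHook, hm, List.take_succ_cons]
            simp only [List.headI]
            rw [List.length_cons, List.length_take]
            simp only [List.length_cons] at hlen2 ⊢
            omega
          · exact hblocks b hb

lemma hh_supported {k a : ℕ} (ha : a ≤ k) : hh a ∈ supported ℚ (Set.Iio k) := by
  cases a with
  | zero => exact Subalgebra.one_mem _
  | succ a =>
    rw [hh]
    rw [X_mem_supported]
    simp only [Set.mem_Iio]
    omega

lemma hZ_supported {k : ℕ} {m : ℤ} (hm : m ≤ k) : hZ m ∈ supported ℚ (Set.Iio k) := by
  by_cases h : m < 0
  · rw [hZ, if_pos h]; exact Subalgebra.zero_mem _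
  · rw [hZ, if_neg h]
    exact hh_supported (by omega)

lemma schur_supported {k : ℕ} {l : List ℕ} (hl : IsPartition l) (hmh : mainHook l ≤ k) :
    schur l ∈ supported ℚ (Set.Iio k) := by
  classical
  rw [schur, Matrix.det_apply]
  apply Subalgebra.sum_mem
  intro σ _
  have hp : (∏ i : Fin l.length, (Matrix.of fun i j : Fin l.length =>
      hZ (((l.get i : ℕ) : ℤ) - ((i : ℕ) : ℤ) + ((j : ℕ) : ℤ))) (σ i) i)
      ∈ supported ℚ (Set.Iio k) := by
    apply Subalgebra.prod_mem
    intro i _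
    simp only [Matrix.of_apply]
    apply hZ_supported
    have h0 : 0 < l.length := i.pos
    have hhead : l.get (σ i) ≤ l.headI := by
      have := sorted_get_le hl.1 ⟨0, h0⟩ (σ i) (by simp [Fin.le_def])
      have hg : l.get ⟨0, h0⟩ = l.headI := by
        cases l with
        | nil => simp at h0
        | cons a rest => rfl
      omega
    have hi : (i : ℕ) < l.length := i.isLt
    have hmh' : l.headI + l.length - 1 ≤ k := hmh
    omega
  have := zsmul_mem hp ((Equiv.Perm.sign σ : ℤˣ) : ℤ)
  simpa [Units.smul_def] using this


/-- blocks lemma: product of Schur functions over a list of partitions. -/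
lemma blocks_lead (bs : List (List ℕ)) (h : ∀ b ∈ bs, IsPartition b) :
    IsLead (expOf bs.flatten) ((bs.map schur).prod) := by
  induction bs with
  | nil =>
    refine ⟨0, by simp [expOf_nil], GoodRem.zero _⟩
  | cons b bs ih =>
    rw [List.flatten_cons, expOf_append, List.map_cons, List.prod_cons]
    exact (schur_lead b (h b (List.mem_cons_self))).mul
      (ih fun c hc => h c (List.mem_cons_of_mem _ hc))

lemma Gk_lead {k : ℕ} (hk : 1 ≤ k) {l : List ℕ} (hl : IsPartition l) (hbd : KBounded k l) :
    IsLead (expOf l) (Gk k l) := by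
  obtain ⟨hjoin, hblocks⟩ := kSplitAux_props k hk l.length l (le_refl _) hl hbd
  rw [Gk]
  have := blocks_lead (kSplit k l) (fun b hb => (hblocks b hb).1)
  rw [kSplit] at *
  rwa [hjoin] at this

lemma Gk_supported {k : ℕ} (hk : 1 ≤ k) {l : List ℕ} (hl : IsPartition l) (hbd : KBounded k l) :
    Gk k l ∈ supported ℚ (Set.Iio k) := by
  obtain ⟨hjoin, hblocks⟩ := kSplitAux_props k hk l.length l (le_refl _) hl hbd
  rw [Gk]
  generalize hbs : kSplit k l = bs
  rw [kSplit] at hbs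
  rw [hbs] at hblocks
  clear hbs hjoin
  induction bs with
  | nil => simpa using Subalgebra.one_mem _
  | cons b bs ih =>
    rw [List.map_cons, List.prod_cons]
    refine Subalgebra.mul_mem _ ?_ (ih fun c hc => hblocks c (List.mem_cons_of_mem _ hc))
    have hb := hblocks b (List.mem_cons_self)
    exact schur_supported hb.1 hb.2.2

lemma hProd_supported {k : ℕ} {l : List ℕ} (hbd : KBounded k l) :
    hProd l ∈ supported ℚ (Set.Iio k) := by
  induction l with
  | nil => simpa [hProd] using Subalgebra.one_mem _
  | cons a rest ih =>
    have : hProd (a :: rest) = hh a * hProd rest := by simp [hProd]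
    rw [this]
    exact Subalgebra.mul_mem _ (hh_supported (hbd a (List.mem_cons_self)))
      (ih fun x hx => hbd x (List.mem_cons_of_mem _ hx))

end KSP
namespace KSP
open MvPolynomial Finset

/-- the sorted k-bounded partition associated to an exponent. -/
def listOf (d : ℕ →₀ ℕ) : List ℕ := Multiset.sort (d.toMultiset.map (· + 1)) (· ≥ ·)

lemma listOf_partition (d : ℕ →₀ ℕ) : IsPartition (listOf d) := by
  constructor
  · exact Multiset.pairwise_sort _ _
  · intro x hx
    rw [listOf, Multiset.mem_sort] at hx
    obtain ⟨y, _, rfl⟩ := Multiset.mem_map.1 hx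
    omega

lemma listOf_bounded {k : ℕ} {d : ℕ →₀ ℕ} (h : (d.support : Set ℕ) ⊆ Set.Iio k) :
    KBounded k (listOf d) := by
  intro x hx
  rw [listOf, Multiset.mem_sort] at hx
  obtain ⟨y, hy, rfl⟩ := Multiset.mem_map.1 hx
  have : y ∈ d.support := (Finsupp.mem_toMultiset d y).1 hy
  have := h this
  simp only [Set.mem_Iio] at this
  omega

lemma sum_single_toMultiset (d : ℕ →₀ ℕ) :
    (d.toMultiset.map (fun y => Finsupp.single y 1)).sum = d := by
  induction d using Finsupp.induction with
  | zero => simp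
  | single_add a n f han hn ih =>
    rw [Finsupp.toMultiset_add, Multiset.map_add, Multiset.sum_add, ih]
    congr 1
    rw [Finsupp.toMultiset_single]
    rw [Multiset.nsmul_singleton]
    rw [Multiset.map_replicate, Multiset.sum_replicate]
    rw [Finsupp.smul_single, smul_eq_mul, mul_one]

lemma expOf_perm {l l' : List ℕ} (h : l.Perm l') : expOf l = expOf l' := by
  rw [expOf, expOf]
  exact List.Perm.sum_eq (h.map eexp)

lemma expOf_listOf (d : ℕ →₀ ℕ) : expOf (listOf d) = d := by
  have hperm : (listOf d).Perm (d.toMultiset.map (· + 1)).toList := by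
    rw [← Multiset.coe_eq_coe, listOf]
    rw [Multiset.sort_eq, Multiset.coe_toList]
  rw [expOf_perm hperm]
  rw [expOf]
  rw [← Multiset.sum_coe, ← Multiset.map_coe, Multiset.coe_toList]
  rw [Multiset.map_map]
  have hfun : (d.toMultiset.map (eexp ∘ (· + 1)))
      = d.toMultiset.map (fun y => Finsupp.single y 1) := by
    apply Multiset.map_congr rfl
    intro y _
    simp [eexp]
  rw [hfun, sum_single_toMultiset]

lemma partition_multiset (l : List ℕ) (hl : IsPartition l) :
    (expOf l).toMultiset.map (· + 1) = (l.map (· - 1) : Multiset ℕ).map (· + 1) := by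
  induction l with
  | nil => simp [expOf_nil]
  | cons a rest ih =>
    have ha : 1 ≤ a := hl.2 a (List.mem_cons_self)
    have hrest : IsPartition rest :=
      ⟨(List.pairwise_cons.1 hl.1).2, fun x hx => hl.2 x (List.mem_cons_of_mem _ hx)⟩
    rw [expOf_cons, Finsupp.toMultiset_add, Multiset.map_add, ih hrest]
    have : eexp a = Finsupp.single (a - 1) 1 := by
      obtain ⟨b, rfl⟩ : ∃ b, a = b + 1 := ⟨a - 1, by omega⟩
      simp [eexp]
    rw [this, Finsupp.toMultiset_single]
    simp

lemma expOf_injective {l l' : List ℕ} (hl : IsPartition l) (hl' : IsPartition l')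
    (h : expOf l = expOf l') : l = l' := by
  have h2 : ((l.map (· - 1) : Multiset ℕ)).map (· + 1)
      = ((l'.map (· - 1) : Multiset ℕ)).map (· + 1) := by
    rw [← partition_multiset l hl, ← partition_multiset l' hl', h]
  have h3 : (l : Multiset ℕ) = (l' : Multiset ℕ) := by
    have hme : ∀ (m : List ℕ), IsPartition m →
        ((m.map (· - 1) : Multiset ℕ)).map (· + 1) = (m : Multiset ℕ) := by
      intro m hm
      rw [Multiset.map_coe, Multiset.coe_eq_coe, List.map_map]
      have : ∀ x ∈ m, ((· + 1) ∘ (· - 1)) x = x := by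
        intro x hx
        have := hm.2 x hx
        simp only [Function.comp_apply]
        omega
      rw [List.map_congr_left this, List.map_id']
    rw [← hme l hl, ← hme l' hl', h2]
  exact List.Perm.eq_of_pairwise' hl.1 hl'.1 (Multiset.coe_eq_coe.1 h3)

end KSP
namespace KSP
open MvPolynomial Finset

def phi (k : ℕ) (d : ℕ →₀ ℕ) : ℕ := ∑ i ∈ range k, d i * (wdeg d + 1)^i

def meas (k : ℕ) (d : ℕ →₀ ℕ) : ℕ := (wdeg d + 1)^k - phi k d

lemma geom_bound (B : ℕ) (hB : 1 ≤ B) : ∀ j, ∑ i ∈ range j, (B-1) * B^i = B^j - 1 := by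
  intro j
  induction j with
  | zero => simp
  | succ j ih =>
    rw [Finset.sum_range_succ, ih]
    have h1 : 1 ≤ B^j := Nat.one_le_pow _ _ (by omega)
    have h2 : B^(j+1) = B * B^j := by ring
    have h3 : (B-1) * B^j = B*B^j - B^j := by rw [Nat.sub_mul, one_mul]
    have h4 : B ^ j ≤ B * B^j := Nat.le_mul_of_pos_left _ (by omega)
    rw [h2, h3]
    generalize hy : B * B ^ j = y at h4 ⊢
    generalize hx : B ^ j = x at h1 h4 ⊢
    omega

lemma phi_lt (k : ℕ) (d : ℕ →₀ ℕ) : phi k d < (wdeg d + 1)^k := by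
  set B := wdeg d + 1 with hB
  have h1 : phi k d ≤ ∑ i ∈ range k, (B-1) * B^i := by
    apply Finset.sum_le_sum
    intro i _
    have := coord_le_wdeg d i
    apply Nat.mul_le_mul_right
    omega
  rw [geom_bound B (by omega)] at h1
  have : 1 ≤ B^k := Nat.one_le_pow _ _ (by omega)
  omega

lemma meas_lt {k : ℕ} {d e : ℕ →₀ ℕ} (hd : Rlt d e) (hw : wdeg e = wdeg d)
    (he : (e.support : Set ℕ) ⊆ Set.Iio k) : meas k e < meas k d := by
  obtain ⟨j, hab, hj⟩ := hd
  set B := wdeg d + 1 with hB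
  have hjk : j < k := by
    have hje : j ∈ e.support := Finsupp.mem_support_iff.2 (by omega)
    have := he hje
    simpa using this
  have hsplit : ∀ x : ℕ →₀ ℕ, ∑ i ∈ range k, x i * B^i
      = (∑ i ∈ range j, x i * B^i) + x j * B^j + ∑ i ∈ Ico (j+1) k, x i * B^i := by
    intro x
    have h1 : ∑ i ∈ Ico 0 (j+1), (fun i => x i * B^i) i + ∑ i ∈ Ico (j+1) k, (fun i => x i * B^i) i
        = ∑ i ∈ Ico 0 k, (fun i => x i * B^i) i :=
      Finset.sum_Ico_consecutive _ (by omega) (by omega)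
    simp only [← Finset.range_eq_Ico] at h1
    rw [← h1, Finset.sum_range_succ]
  have hphid : phi k d = (∑ i ∈ range j, d i * B^i) + d j * B^j + ∑ i ∈ Ico (j+1) k, d i * B^i :=
    hsplit d
  have hphie : phi k e = (∑ i ∈ range j, e i * B^i) + e j * B^j + ∑ i ∈ Ico (j+1) k, e i * B^i := by
    rw [phi, hw]
    exact hsplit e
  have htail : ∑ i ∈ Ico (j+1) k, d i * B^i = ∑ i ∈ Ico (j+1) k, e i * B^i := by
    refine Finset.sum_congr rfl fun i hi => ?_
    rw [hab i (by simp only [Finset.mem_Ico] at hi; omega)]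
  have hS1 : ∑ i ∈ range j, d i * B^i ≤ B^j - 1 := by
    rw [← geom_bound B (by omega) j]
    apply Finset.sum_le_sum
    intro i _
    have := coord_le_wdeg d i
    apply Nat.mul_le_mul_right
    omega
  have hej : d j * B^j + B^j ≤ e j * B^j := by
    have h3 : (d j + 1) * B^j ≤ e j * B^j := Nat.mul_le_mul_right _ (by omega)
    nlinarith
  have hBj : 1 ≤ B^j := Nat.one_le_pow _ _ (by omega)
  have hS1' : (∑ i ∈ range j, d i * B^i) + 1 ≤ B^j := by
    have h := Nat.add_le_add_right hS1 1
    rwa [Nat.sub_add_cancel hBj] at h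
  have hphilt : phi k d < phi k e := by
    have h0 : 0 ≤ ∑ i ∈ range j, e i * B^i := Nat.zero_le _
    linarith [hphid, hphie, htail, hej, hS1']
  have hphidlt : phi k d < (wdeg d + 1)^k := phi_lt k d
  unfold meas
  rw [hw]
  exact Nat.sub_lt_sub_left hphidlt hphilt

lemma LamK_eq (k : ℕ) : LamK k = Subalgebra.toSubmodule (supported ℚ (Set.Iio k)) := by
  apply le_antisymm
  · rw [LamK, Submodule.span_le]
    rintro f ⟨l, hpart, hbd, rfl⟩
    exact hProd_supported hbd
  · intro f hf
    have hf' : f ∈ supported ℚ (Set.Iio k) := hf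
    rw [MvPolynomial.as_sum f]
    apply Submodule.sum_mem
    intro v hv
    have hvsupp : (v.support : Set ℕ) ⊆ Set.Iio k := by
      intro i hi
      apply (MvPolynomial.mem_supported.1 hf')
      rw [Finset.mem_coe] at hi
      exact_mod_cast (MvPolynomial.mem_vars i).2 ⟨v, hv, hi⟩
    have hmono : MvPolynomial.monomial v (1:ℚ) = hProd (listOf v) := by
      rw [hProd_eq, expOf_listOf]
    have hmem : hProd (listOf v) ∈ LamK k :=
      Submodule.subset_span ⟨listOf v, listOf_partition v, listOf_bounded hvsupp, rfl⟩
    have hsm : MvPolynomial.monomial v (coeff v f) = coeff v f • MvPolynomial.monomial v (1:ℚ) := by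
      rw [MvPolynomial.smul_monomial, smul_eq_mul, mul_one]
    rw [hsm, hmono]
    exact Submodule.smul_mem _ _ hmem

abbrev PartIdx (k : ℕ) := {l : List ℕ // IsPartition l ∧ KBounded k l}

lemma monomial_mem_spanG (k : ℕ) (hk : 1 ≤ k) :
    ∀ (N : ℕ) (d : ℕ →₀ ℕ), (d.support : Set ℕ) ⊆ Set.Iio k → meas k d < N →
    MvPolynomial.monomial d (1:ℚ) ∈
      Submodule.span ℚ (Set.range fun l : PartIdx k => Gk k l.1) := by
  intro N
  induction N with
  | zero => intro d _ h; omega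
  | succ N ih =>
    intro d hsupp hm
    have hpart := listOf_partition d
    have hbd := listOf_bounded hsupp
    obtain ⟨r, hG, hr⟩ := Gk_lead hk hpart hbd
    rw [expOf_listOf] at hG hr
    have hGk_mem : Gk k (listOf d) ∈
        Submodule.span ℚ (Set.range fun l : PartIdx k => Gk k l.1) :=
      Submodule.subset_span ⟨⟨listOf d, hpart, hbd⟩, rfl⟩
    have hGk_supp : Gk k (listOf d) ∈ supported ℚ (Set.Iio k) := Gk_supported hk hpart hbd
    have hmono_supp : MvPolynomial.monomial d (1:ℚ) ∈ supported ℚ (Set.Iio k) := by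
      have : MvPolynomial.monomial d (1:ℚ) = hProd (listOf d) := by
        rw [hProd_eq, expOf_listOf]
      rw [this]
      exact hProd_supported hbd
    have hr_supp : r ∈ supported ℚ (Set.Iio k) := by
      have : r = Gk k (listOf d) - MvPolynomial.monomial d (1:ℚ) := by
        rw [hG]; ring
      rw [this]
      exact sub_mem hGk_supp hmono_supp
    have hrspan : r ∈ Submodule.span ℚ (Set.range fun l : PartIdx k => Gk k l.1) := by
      rw [MvPolynomial.as_sum r]
      apply Submodule.sum_mem
      intro e he
      obtain ⟨hrlt, hwd⟩ := hr e he
      have hesupp : (e.support : Set ℕ) ⊆ Set.Iio k := by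
        intro i hi
        apply (MvPolynomial.mem_supported.1 hr_supp)
        rw [Finset.mem_coe] at hi
        exact_mod_cast (MvPolynomial.mem_vars i).2 ⟨e, he, hi⟩
      have hms := meas_lt hrlt hwd hesupp
      have hrec := ih e hesupp (by omega)
      have hsm : MvPolynomial.monomial e (coeff e r)
          = coeff e r • MvPolynomial.monomial e (1:ℚ) := by
        rw [MvPolynomial.smul_monomial, smul_eq_mul, mul_one]
      rw [hsm]
      exact Submodule.smul_mem _ _ hrec
    have hfinal : MvPolynomial.monomial d (1:ℚ) = Gk k (listOf d) - r := by
      rw [hG]; ring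
    rw [hfinal]
    exact sub_mem hGk_mem hrspan

end KSP
/-- For every integer `k ≥ 1`, the `k`-split polynomials
`{G_λ^{(k)}}`, indexed by the `k`-bounded partitions `λ`, form a basis of the
vector space `Λ^{(k)}`: they are linearly independent and span `Λ^{(k)}`. -/
theorem kSplit_polynomials_basis (k : ℕ) (hk : 1 ≤ k) :
    LinearIndependent ℚ
      (fun l : {l : List ℕ // IsPartition l ∧ KBounded k l} => Gk k l.1) ∧
    Submodule.span ℚ
      (Set.range fun l : {l : List ℕ // IsPartition l ∧ KBounded k l} => Gk k l.1) =
      LamK k := by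
  classical
  constructor
  · rw [linearIndependent_iff]
    intro c hc
    by_contra hne
    have hsupp : c.support.Nonempty := Finsupp.support_nonempty_iff.2 hne
    obtain ⟨d0, hd0E, hd0min⟩ := KSP.exists_Rlt_minimal
      (c.support.image (fun l => KSP.expOf l.1)) (hsupp.image _)
    obtain ⟨l0, hl0, hd0⟩ := Finset.mem_image.1 hd0E
    rw [Finsupp.linearCombination_apply, Finsupp.sum] at hc
    have hcoeff : MvPolynomial.coeff d0 (∑ l ∈ c.support, c l • Gk k l.1) = 0 := by
      rw [hc]; simp
    rw [MvPolynomial.coeff_sum] at hcoeff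
    have hterm : ∀ l ∈ c.support,
        MvPolynomial.coeff d0 (c l • Gk k l.1) = if l = l0 then c l else 0 := by
      intro l hl
      obtain ⟨r, hG, hr⟩ := KSP.Gk_lead hk l.2.1 l.2.2
      rw [MvPolynomial.coeff_smul, hG, MvPolynomial.coeff_add, MvPolynomial.coeff_monomial]
      have hcr : MvPolynomial.coeff d0 r = 0 := by
        by_contra hcr
        have hd0supp : d0 ∈ r.support := MvPolynomial.mem_support_iff.2 hcr
        obtain ⟨hrlt, -⟩ := hr d0 hd0supp
        exact hd0min (KSP.expOf l.1) (Finset.mem_image_of_mem _ hl) hrlt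
      rw [hcr, add_zero]
      by_cases he : KSP.expOf l.1 = d0
      · have hll0 : l = l0 :=
          Subtype.ext (KSP.expOf_injective l.2.1 l0.2.1 (by rw [he, hd0]))
        rw [if_pos he, if_pos hll0, smul_eq_mul, mul_one]
      · have hll0 : l ≠ l0 := fun h => he (by rw [h, hd0])
        rw [if_neg he, if_neg hll0, smul_eq_mul, mul_zero]
    rw [Finset.sum_congr rfl hterm, Finset.sum_ite_eq' c.support l0, if_pos hl0] at hcoeff
    exact (Finsupp.mem_support_iff.1 hl0) hcoeff
  · apply le_antisymm
    · rw [Submodule.span_le]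
      rintro _ ⟨⟨l, hp, hb⟩, rfl⟩
      rw [KSP.LamK_eq]
      exact KSP.Gk_supported hk hp hb
    · rw [KSP.LamK_eq]
      intro f hf
      have hf' : f ∈ MvPolynomial.supported ℚ (Set.Iio k) := hf
      rw [MvPolynomial.as_sum f]
      apply Submodule.sum_mem
      intro v hv
      have hvsupp : (v.support : Set ℕ) ⊆ Set.Iio k := by
        intro i hi
        apply (MvPolynomial.mem_supported.1 hf')
        rw [Finset.mem_coe] at hi
        exact_mod_cast (MvPolynomial.mem_vars i).2 ⟨v, hv, hi⟩
      have hsm : MvPolynomial.monomial v (MvPolynomial.coeff v f)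
          = MvPolynomial.coeff v f • MvPolynomial.monomial v (1:ℚ) := by
        rw [MvPolynomial.smul_monomial, smul_eq_mul, mul_one]
      rw [hsm]
      exact Submodule.smul_mem _ _
        (KSP.monomial_mem_spanG k hk (KSP.meas k v + 1) v hvsupp (by omega))
end
end

section
/- For any k-bounded partition λ, the k-split polynomial expands unitriangularly in the homogeneous basis with integer coefficients and k-bounded indices: G_λ^{(k)} = h_λ + Σ_{μ > λ, μ_1 ≤ k} g_{λμ}^{(k)} h_μ, where the sum is over k-bounded partitions μ of |λ| with μ > λ in dominance order and each g_{λμ}^{(k)} is an integer. -/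
open scoped BigOperators Classical

noncomputable section

/-- Sort a list of naturals in weakly decreasing order. -/
def sortD (l : List ℕ) : List ℕ := List.insertionSort (· ≥ ·) l

lemma sortD_perm (l : List ℕ) : (sortD l).Perm l := List.perm_insertionSort _ _

lemma sortD_sorted (l : List ℕ) : (sortD l).Pairwise (· ≥ ·) :=
  List.pairwise_insertionSort (r := (· ≥ ·)) _

/-- Sum of `range j` is at most the sum of any finset of `j` naturals. -/
lemma sum_range_le (j : ℕ) (S : Finset ℕ) (h : S.card = j) :
    (∑ m ∈ Finset.range j, m) ≤ ∑ m ∈ S, m ∧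
      (S ≠ Finset.range j → (∑ m ∈ Finset.range j, m) < ∑ m ∈ S, m) := by
  induction j generalizing S with
  | zero =>
      have : S = ∅ := Finset.card_eq_zero.mp h
      subst this
      simp
  | succ j ih =>
      have hne : S.Nonempty := Finset.card_pos.mp (by omega)
      set m := S.max' hne with hm
      have hmem : m ∈ S := S.max'_mem hne
      have hsub : S ⊆ Finset.range (m + 1) := by
        intro x hx
        exact Finset.mem_range.mpr (Nat.lt_succ_of_le (S.le_max' x hx))
      have hjm : j ≤ m := by
        have := Finset.card_le_card hsub
        rw [h, Finset.card_range] at this; omega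
      have hcard' : (S.erase m).card = j := by
        rw [Finset.card_erase_of_mem hmem, h]
        omega

      obtain ⟨ihle, _⟩ := ih (S.erase m) hcard'
      have hS : (∑ x ∈ S, x) = m + ∑ x ∈ S.erase m, x :=
        (Finset.add_sum_erase S _ hmem).symm
      constructor
      · rw [Finset.sum_range_succ, hS]; omega
      · intro hneq
        rcases lt_or_eq_of_le hjm with hlt | heq
        · rw [Finset.sum_range_succ, hS]; omega
        · exfalso
          apply hneq
          apply Finset.eq_of_subset_of_card_le
          · rw [← heq] at hsub; exact hsub
          · rw [h, Finset.card_range]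
  
/-- prefix sums: basic facts -/
lemma take_sum_le_sum (l : List ℕ) (j : ℕ) : (l.take j).sum ≤ l.sum := by
  have := List.sum_take_add_sum_drop l j
  omega

lemma take_sum_lt_sum (l : List ℕ) (hpos : ∀ x ∈ l, 0 < x) {j : ℕ} (hj : j < l.length) :
    (l.take j).sum < l.sum := by
  have h1 := List.sum_take_add_sum_drop l j
  have h2 : l.drop j ≠ [] := by
    intro h
    have := congrArg List.length h
    simp at this
    omega
  obtain ⟨y, t, hyt⟩ := List.exists_cons_of_ne_nil h2
  have hy : 0 < y := hpos y (List.mem_of_mem_drop (by rw [hyt]; exact List.mem_cons_self))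
  have : 0 < (l.drop j).sum := by rw [hyt]; simp [List.sum_cons]; omega
  omega

/-- If `a` dominates `α` with equal sums and positive entries, `a` is no longer. -/
lemma length_le_of_dom (α a : List ℕ) (hpos : ∀ x ∈ a, 0 < x)
    (hdom : ∀ i : ℕ, (α.take i).sum ≤ (a.take i).sum) (hsum : a.sum = α.sum) :
    a.length ≤ α.length := by
  by_contra hlen
  push_neg at hlen
  have h1 : (α.take α.length).sum = α.sum := by rw [List.take_of_length_le le_rfl]
  have h2 := hdom α.length
  have h3 := take_sum_lt_sum a hpos hlen
  omega

/-- Key lemma: any sub-multiset of a sorted-descending list of size `≤ J`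
has sum at most the sum of the first `J` entries. -/
lemma sum_le_take_sorted (c : List ℕ) (hc : c.Pairwise (· ≥ ·)) :
    ∀ (J : ℕ) (s : Multiset ℕ), s ≤ (c : Multiset ℕ) → Multiset.card s ≤ J →
      s.sum ≤ (c.take J).sum := by
  induction c with
  | nil =>
      intro J s hs _
      have : s = 0 := Multiset.le_zero.mp (by simpa using hs)
      simp [this]
  | cons x c' ih =>
      obtain ⟨hx, hc'⟩ := List.pairwise_cons.mp hc
      intro J s hs hcard
      rw [← Multiset.cons_coe] at hs
      by_cases hxs : x ∈ s
      · have hse : x ::ₘ s.erase x = s := Multiset.cons_erase hxs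
        have hle : s.erase x ≤ (c' : Multiset ℕ) := by
          rw [← Multiset.cons_le_cons_iff x, hse]; exact hs
        cases J with
        | zero =>
            exfalso
            have : Multiset.card s = 0 := Nat.le_zero.mp hcard
            rw [Multiset.card_eq_zero] at this
            simp [this] at hxs
        | succ J' =>
            have hcard' : Multiset.card (s.erase x) ≤ J' := by
              have h := Multiset.card_erase_of_mem hxs
              rw [Nat.pred_eq_sub_one] at h
              have hpos : 0 < Multiset.card s := Multiset.card_pos_iff_exists_mem.mpr ⟨x, hxs⟩
              omega
            have := ih hc' J' (s.erase x) hle hcard'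
            have hsum : s.sum = x + (s.erase x).sum := by
              rw [← hse]; simp
            rw [hsum]
            simp only [List.take_succ_cons, List.sum_cons]
            omega
      · have hle : s ≤ (c' : Multiset ℕ) := by
          rw [Multiset.le_iff_count]
          intro a
          by_cases hax : a = x
          · subst hax
            simp [Multiset.count_eq_zero_of_notMem hxs]
          · have := (Multiset.le_iff_count.mp hs) a
            rwa [Multiset.count_cons_of_ne hax] at this
        have h1 := ih hc' J s hle hcard
        have h2 : ((c'.take J).sum) ≤ (((x :: c').take J).sum) := by
          cases J with
          | zero => simp
          | succ J' =>
              simp only [List.take_succ_cons, List.sum_cons]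
              rw [List.take_succ]
              rw [List.sum_append]
              have : (c'[J']?.toList).sum ≤ x := by
                cases hJ : c'[J']? with
                | none => simp
                | some y =>
                    have hy : y ∈ c' := by
                      have := List.getElem?_eq_some_iff.mp hJ
                      obtain ⟨hlt, heq⟩ := this
                      rw [← heq]; exact List.getElem_mem _
                    simpa using hx y hy
              omega
        omega


lemma take_sum_eq_fin (l : List ℕ) (j : ℕ) :
    ((l.take j).sum : ℤ) = ∑ m : Fin l.length, if (m : ℕ) < j then (l.get m : ℤ) else 0 := by
  induction l generalizing j with
  | nil => simp
  | cons x t ih =>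
      cases j with
      | zero => simp
      | succ j =>
          have hrw : (∑ m : Fin (x :: t).length, if (m : ℕ) < j + 1 then ((x :: t).get m : ℤ) else 0)
              = ∑ m : Fin (t.length + 1), if (m : ℕ) < j + 1 then ((x :: t).get m : ℤ) else 0 := rfl
          rw [hrw, Fin.sum_univ_succ]
          simp only [List.take_succ_cons, List.sum_cons, Nat.cast_add]
          rw [ih j]
          simp [Nat.succ_lt_succ_iff]

lemma filter_pos_prefix (l : List ℕ) (hl : l.Pairwise (· ≥ ·)) :
    ∃ m, l.filter (fun x => decide (0 < x)) = l.take m := by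
  induction l with
  | nil => exact ⟨0, rfl⟩
  | cons x t ih =>
      obtain ⟨hx, ht⟩ := List.pairwise_cons.mp hl
      by_cases hx0 : 0 < x
      · obtain ⟨m, hm⟩ := ih ht
        exact ⟨m + 1, by simp [List.filter_cons, hx0, hm]⟩
      · refine ⟨0, ?_⟩
        simp only [List.take_zero]
        rw [List.filter_eq_nil_iff]
        intro a ha
        rcases List.mem_cons.mp ha with h | h
        · subst h; simpa using hx0
        · have := hx a h; simp; omega

lemma filter_pos_sum (l : List ℕ) : (l.filter (fun x => decide (0 < x))).sum = l.sum := by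
  induction l with
  | nil => rfl
  | cons x t ih =>
      by_cases hx0 : 0 < x
      · simp [List.filter_cons, hx0, ih]
      · have hx : x = 0 := by omega
        subst hx
        simpa using ih

lemma hProd_cons (x : ℕ) (t : List ℕ) : hProd (x :: t) = hh x * hProd t := by
  simp [hProd]

lemma hProd_append (a b : List ℕ) : hProd (a ++ b) = hProd a * hProd b := by
  simp [hProd]

lemma hProd_perm {a b : List ℕ} (h : a.Perm b) : hProd a = hProd b :=
  (h.map hh).prod_eq

lemma hProd_filter_pos (l : List ℕ) :
    hProd (l.filter (fun x => decide (0 < x))) = hProd l := by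
  induction l with
  | nil => rfl
  | cons x t ih =>
      by_cases hx0 : 0 < x
      · simp [List.filter_cons, hx0, hProd_cons, ih]
      · have hx : x = 0 := by omega
        subst hx
        simp only [List.filter_cons, hProd_cons]
        norm_num [ih, hh]

lemma mem_le_headI {l : List ℕ} (hl : l.Pairwise (· ≥ ·)) {x : ℕ} (hx : x ∈ l) :
    x ≤ l.headI := by
  cases l with
  | nil => simp at hx
  | cons y t =>
      obtain ⟨hy, _⟩ := List.pairwise_cons.mp hl
      rcases List.mem_cons.mp hx with h | h
      · subst h; simp
      · simpa using hy x h

/-- Weakly good: `μ` is a `k`-bounded partition of the same size dominating `lam`. -/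
def GoodW (k : ℕ) (lam mu : List ℕ) : Prop :=
  IsPartition mu ∧ KBounded k mu ∧ mu.sum = lam.sum ∧ Dominates mu lam

/-- Strictly dominating at some prefix. -/
def StrictP (lam mu : List ℕ) : Prop := ∃ j, (lam.take j).sum < (mu.take j).sum

/-- ℤ-span of `h_μ` for weakly good `μ`. -/
def WSp (k : ℕ) (lam : List ℕ) : Submodule ℤ SymFn :=
  Submodule.span ℤ {f : SymFn | ∃ μ, GoodW k lam μ ∧ f = hProd μ}

/-- ℤ-span of `h_μ` for strictly good `μ`. -/
def SSp (k : ℕ) (lam : List ℕ) : Submodule ℤ SymFn :=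
  Submodule.span ℤ {f : SymFn | ∃ μ, GoodW k lam μ ∧ StrictP lam μ ∧ f = hProd μ}

lemma SSp_le_WSp (k : ℕ) (lam : List ℕ) : SSp k lam ≤ WSp k lam :=
  Submodule.span_mono (fun f ⟨μ, h1, _, h3⟩ => ⟨μ, h1, h3⟩)


lemma sum_le_take_of_sublist {a b : List ℕ} (s : List ℕ) (hs : s.Sublist (a ++ b))
    (J : ℕ) (hJ : s.length ≤ J) : s.sum ≤ ((sortD (a ++ b)).take J).sum := by
  apply sum_le_take_sorted (sortD (a ++ b)) (sortD_sorted _) J (↑s)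
  · have hcoe : ((sortD (a ++ b) : List ℕ) : Multiset ℕ) = ↑(a ++ b) :=
      Multiset.coe_eq_coe.mpr (sortD_perm _)
    rw [hcoe]
    exact Multiset.coe_le.mpr hs.subperm
  · simpa using hJ

lemma merge_good (k : ℕ) {α β a b : List ℕ}
    (ha : GoodW k α a) (hb : GoodW k β b) :
    GoodW k (α ++ β) (sortD (a ++ b)) ∧ hProd a * hProd b = hProd (sortD (a ++ b)) := by
  obtain ⟨⟨hasort, hapos⟩, hak, hasum, hadom⟩ := ha
  obtain ⟨⟨hbsort, hbpos⟩, hbk, hbsum, hbdom⟩ := hb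
  have hperm : (sortD (a ++ b)).Perm (a ++ b) := sortD_perm _
  have hmem : ∀ x ∈ sortD (a ++ b), x ∈ a ∨ x ∈ b := by
    intro x hx
    exact List.mem_append.mp (hperm.mem_iff.mp hx)
  have hlen : a.length ≤ α.length := length_le_of_dom α a hapos hadom hasum
  refine ⟨⟨⟨sortD_sorted _, ?_⟩, ?_, ?_, ?_⟩, ?_⟩
  · intro x hx; rcases hmem x hx with h | h
    · exact hapos x h
    · exact hbpos x h
  · intro x hx; rcases hmem x hx with h | h
    · exact hak x h
    · exact hbk x h
  · rw [hperm.sum_eq, List.sum_append, hasum, hbsum, List.sum_append]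
  · intro J
    by_cases hJ : J ≤ α.length
    · rw [List.take_append_of_le_length hJ]
      refine le_trans (hadom J) ?_
      apply sum_le_take_of_sublist (a.take J)
        ((List.take_sublist J a).trans (List.sublist_append_left a b))
      rw [List.length_take]; omega
    · push_neg at hJ
      have hJ' : J = α.length + (J - α.length) := by omega
      rw [hJ', List.take_length_add_append, List.sum_append]
      have h1 : (β.take (J - α.length)).sum ≤ (b.take (J - α.length)).sum :=
        hbdom _
      have h2 : α.sum ≤ a.sum := le_of_eq hasum.symm
      refine le_trans (add_le_add h2 h1) ?_
      rw [← List.sum_append]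
      apply sum_le_take_of_sublist (a ++ b.take (J - α.length))
        ((List.take_sublist _ b).append_left a)
      rw [List.length_append, List.length_take]; omega
  · rw [← hProd_append]
    exact hProd_perm hperm.symm

lemma merge_strict (k : ℕ) {α β a b : List ℕ}
    (ha : GoodW k α a) (hb : GoodW k β b)
    (hs : StrictP α a ∨ StrictP β b) : StrictP (α ++ β) (sortD (a ++ b)) := by
  obtain ⟨⟨hasort, hapos⟩, hak, hasum, hadom⟩ := ha
  obtain ⟨⟨hbsort, hbpos⟩, hbk, hbsum, hbdom⟩ := hb
  have hlen : a.length ≤ α.length := length_le_of_dom α a hapos hadom hasum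
  rcases hs with ⟨j, hj⟩ | ⟨j, hj⟩
  · have hjle : j ≤ α.length := by
      by_contra hc
      push_neg at hc
      have h1 : (α.take j).sum = α.sum := by
        rw [List.take_of_length_le (by omega)]
      have h2 : (a.take j).sum ≤ a.sum := take_sum_le_sum a j
      omega
    refine ⟨j, ?_⟩
    rw [List.take_append_of_le_length hjle]
    refine lt_of_lt_of_le hj ?_
    apply sum_le_take_of_sublist (a.take j)
      ((List.take_sublist j a).trans (List.sublist_append_left a b))
    rw [List.length_take]; omega
  · have hjle : j ≤ β.length := by
      by_contra hc
      push_neg at hc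
      have h1 : (β.take j).sum = β.sum := by
        rw [List.take_of_length_le (by omega)]
      have h2 : (b.take j).sum ≤ b.sum := take_sum_le_sum b j
      omega
    refine ⟨α.length + j, ?_⟩
    rw [List.take_length_add_append, List.sum_append]
    have hlt : α.sum + (β.take j).sum < a.sum + (b.take j).sum := by omega
    refine lt_of_lt_of_le hlt ?_
    rw [← List.sum_append]
    apply sum_le_take_of_sublist (a ++ b.take j)
      ((List.take_sublist _ b).append_left a)
    rw [List.length_append, List.length_take]; omega


lemma mul_mem_SSp {k : ℕ} {α β : List ℕ} {x y : SymFn}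
    (hx : x ∈ WSp k α) (hy : y ∈ SSp k β) : x * y ∈ SSp k (α ++ β) := by
  refine Submodule.span_induction ?_ ?_ ?_ ?_ hx
  · rintro x ⟨a, ha, rfl⟩
    refine Submodule.span_induction ?_ ?_ ?_ ?_ hy
    · rintro y ⟨b, hb, hbs, rfl⟩
      obtain ⟨hgood, heq⟩ := merge_good k ha hb
      rw [heq]
      exact Submodule.subset_span ⟨sortD (a ++ b), hgood, merge_strict k ha hb (Or.inr hbs), rfl⟩
    · rw [mul_zero]; exact zero_mem _
    · intro y z _ _ hy hz
      rw [mul_add]; exact add_mem hy hz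
    · intro n y _ hy
      rw [mul_smul_comm]; exact Submodule.smul_mem _ n hy
  · rw [zero_mul]; exact zero_mem _
  · intro x z _ _ hx hz
    rw [add_mul]; exact add_mem hx hz
  · intro n x _ hx
    rw [smul_mul_assoc]; exact Submodule.smul_mem _ n hx

lemma mul_mem_SSp' {k : ℕ} {α β : List ℕ} {x y : SymFn}
    (hx : x ∈ SSp k α) (hy : y ∈ WSp k β) : x * y ∈ SSp k (α ++ β) := by
  refine Submodule.span_induction ?_ ?_ ?_ ?_ hx
  · rintro x ⟨a, ha, has, rfl⟩
    refine Submodule.span_induction ?_ ?_ ?_ ?_ hy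
    · rintro y ⟨b, hb, rfl⟩
      obtain ⟨hgood, heq⟩ := merge_good k ha hb
      rw [heq]
      exact Submodule.subset_span ⟨sortD (a ++ b), hgood, merge_strict k ha hb (Or.inl has), rfl⟩
    · rw [mul_zero]; exact zero_mem _
    · intro y z _ _ hy hz
      rw [mul_add]; exact add_mem hy hz
    · intro n y _ hy
      rw [mul_smul_comm]; exact Submodule.smul_mem _ n hy
  · rw [zero_mul]; exact zero_mem _
  · intro x z _ _ hx hz
    rw [add_mul]; exact add_mem hx hz
  · intro n x _ hx
    rw [smul_mul_assoc]; exact Submodule.smul_mem _ n hx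

lemma kBounded_of_mainHook {k : ℕ} {ν : List ℕ} (hν : IsPartition ν) (hne : ν ≠ [])
    (h : mainHook ν ≤ k) : KBounded k ν := by
  intro x hx
  have hx1 : x ≤ ν.headI := mem_le_headI hν.1 hx
  have hlen : 1 ≤ ν.length := List.length_pos_iff.mpr hne
  unfold mainHook at h; omega

lemma goodW_self {k : ℕ} {l : List ℕ} (hl : IsPartition l) (hb : KBounded k l) :
    GoodW k l l := ⟨hl, hb, rfl, fun _ => le_rfl⟩

lemma isPartition_append_left {α β : List ℕ} (h : IsPartition (α ++ β)) : IsPartition α :=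
  ⟨List.Pairwise.sublist (List.sublist_append_left α β) h.1,
   fun x hx => h.2 x (List.mem_append.mpr (Or.inl hx))⟩

lemma isPartition_append_right {α β : List ℕ} (h : IsPartition (α ++ β)) : IsPartition β :=
  ⟨List.Pairwise.sublist (List.sublist_append_right α β) h.1,
   fun x hx => h.2 x (List.mem_append.mpr (Or.inr hx))⟩


lemma exists_strict_set {n : ℕ} (σ : Equiv.Perm (Fin n)) (hσ : σ ≠ 1) :
    ∃ j, j ≤ n ∧
      (Finset.univ.filter (fun i : Fin n => (σ i : ℕ) < j)).image Fin.val
        ≠ Finset.range j := by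
  by_contra hc
  push_neg at hc
  apply hσ
  apply Equiv.ext
  intro i
  have h1 := hc ((i : ℕ) + 1) i.isLt
  have h2 := hc (i : ℕ) (le_of_lt i.isLt)
  have hmem1 : (i : ℕ) ∈ (Finset.univ.filter
      (fun x : Fin n => (σ x : ℕ) < (i : ℕ) + 1)).image Fin.val := by
    rw [h1]; exact Finset.mem_range.mpr (Nat.lt_succ_self _)
  have hle : (σ i : ℕ) ≤ (i : ℕ) := by
    obtain ⟨x, hx, hxv⟩ := Finset.mem_image.mp hmem1
    have hxi : x = i := Fin.val_injective hxv
    subst hxi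
    have := (Finset.mem_filter.mp hx).2
    omega
  have hmem2 : (i : ℕ) ∉ (Finset.univ.filter
      (fun x : Fin n => (σ x : ℕ) < (i : ℕ))).image Fin.val := by
    rw [h2]; simp
  have hge : ¬ (σ i : ℕ) < (i : ℕ) := by
    intro hlt
    exact hmem2 (Finset.mem_image.mpr ⟨i, Finset.mem_filter.mpr ⟨Finset.mem_univ _, hlt⟩, rfl⟩)
  have : (σ i : ℕ) = (i : ℕ) := by omega
  exact Fin.val_injective this

lemma perm_filter_sum {n : ℕ} (σ : Equiv.Perm (Fin n)) (j : ℕ) (g : Fin n → ℤ) :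
    (∑ i ∈ Finset.univ.filter (fun i : Fin n => (σ i : ℕ) < j), g (σ i))
      = ∑ m ∈ Finset.univ.filter (fun m : Fin n => (m : ℕ) < j), g m := by
  apply Finset.sum_nbij (fun i => σ i)
  · intro a ha
    exact Finset.mem_filter.mpr ⟨Finset.mem_univ _, (Finset.mem_filter.mp ha).2⟩
  · intro a _ b _ hab
    exact σ.injective hab
  · intro m hm
    rw [Finset.coe_filter] at hm
    obtain ⟨-, hmj⟩ := hm
    refine ⟨σ.symm m, ?_, Equiv.apply_symm_apply σ m⟩
    rw [Finset.coe_filter]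
    exact ⟨Finset.mem_univ _, by rwa [Equiv.apply_symm_apply]⟩
  · intro a _; rfl

lemma perm_filter_card {n : ℕ} (σ : Equiv.Perm (Fin n)) (j : ℕ) :
    (Finset.univ.filter (fun i : Fin n => (σ i : ℕ) < j)).card
      = (Finset.univ.filter (fun m : Fin n => (m : ℕ) < j)).card := by
  apply Finset.card_nbij (fun i => σ i)
  · intro a ha
    exact Finset.mem_filter.mpr ⟨Finset.mem_univ _, (Finset.mem_filter.mp ha).2⟩
  · intro a _ b _ hab
    exact σ.injective hab
  · intro m hm
    rw [Finset.coe_filter] at hm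
    obtain ⟨-, hmj⟩ := hm
    refine ⟨σ.symm m, ?_, Equiv.apply_symm_apply σ m⟩
    rw [Finset.coe_filter]
    exact ⟨Finset.mem_univ _, by rwa [Equiv.apply_symm_apply]⟩

lemma perm_term_mem (k : ℕ) {ν : List ℕ} (hν : IsPartition ν) (hne : ν ≠ [])
    (hmh : mainHook ν ≤ k) (σ : Equiv.Perm (Fin ν.length)) (hσ : σ ≠ 1) :
    (∏ i : Fin ν.length, hZ ((ν.get (σ i) : ℤ) - ((σ i : ℕ) : ℤ) + ((i : ℕ) : ℤ)))
      ∈ SSp k ν := by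
  classical
  set e : Fin ν.length → ℤ :=
    fun i => (ν.get (σ i) : ℤ) - ((σ i : ℕ) : ℤ) + ((i : ℕ) : ℤ) with he
  have hgoal_eq : (∏ i : Fin ν.length,
      hZ ((ν.get (σ i) : ℤ) - ((σ i : ℕ) : ℤ) + ((i : ℕ) : ℤ))) = ∏ i, hZ (e i) := rfl
  rw [hgoal_eq]
  by_cases hpos : ∀ i, 0 ≤ e i
  case neg =>
    push_neg at hpos
    obtain ⟨i, hi⟩ := hpos
    have hzero : hZ (e i) = 0 := by rw [hZ, if_pos hi]
    rw [Finset.prod_eq_zero (Finset.mem_univ i) hzero]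
    exact zero_mem _
  case pos =>
  set f : Fin ν.length → ℕ := fun i => (e i).toNat with hfdef
  have hef : ∀ i, (f i : ℤ) = e i := fun i => Int.toNat_of_nonneg (hpos i)
  have hn1 : 1 ≤ ν.length := List.length_pos_iff.mpr hne
  have hget_le : ∀ m : Fin ν.length, ν.get m ≤ ν.headI := by
    intro m
    apply mem_le_headI hν.1
    exact List.get_mem ν m
  have hhead : ν.headI + ν.length - 1 ≤ k := hmh
  have hfk : ∀ i, f i ≤ k := by
    intro i
    have h1 := hget_le (σ i)
    have h2 : (i : ℕ) < ν.length := i.isLt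
    have h5 := hef i
    rw [he] at h5
    simp only at h5
    omega
  set c : List ℕ := sortD (List.ofFn f) with hcdef
  set μ : List ℕ := c.filter (fun x => decide (0 < x)) with hμdef
  have hcperm : c.Perm (List.ofFn f) := sortD_perm _
  have hclen : c.length = ν.length := by
    rw [hcperm.length_eq, List.length_ofFn]
  have hprodeq : (∏ i, hZ (e i)) = hProd μ := by
    have h1 : ∀ i, hZ (e i) = hh (f i) := by
      intro i
      rw [hZ, if_neg (not_lt.mpr (hpos i))]
    calc (∏ i, hZ (e i))
        = ∏ i, hh (f i) := Finset.prod_congr rfl (fun i _ => h1 i)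
      _ = hProd (List.ofFn f) := by
          rw [hProd, List.map_ofFn, List.prod_ofFn]; rfl
      _ = hProd c := hProd_perm hcperm.symm
      _ = hProd μ := (hProd_filter_pos c).symm
  rw [hprodeq]
  -- total sums agree
  have hsum_get : ((ν.sum : ℤ)) = ∑ m : Fin ν.length, (ν.get m : ℤ) := by
    have h := take_sum_eq_fin ν ν.length
    rw [List.take_of_length_le le_rfl] at h
    rw [h]
    exact Finset.sum_congr rfl (fun m _ => by rw [if_pos m.isLt])
  have hsumeZ : (∑ i : Fin ν.length, e i) = (ν.sum : ℤ) := by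
    have h1 : (∑ i : Fin ν.length, e i)
        = (∑ i : Fin ν.length, (ν.get (σ i) : ℤ))
          + ((∑ i : Fin ν.length, ((i : ℕ) : ℤ))
            - ∑ i : Fin ν.length, ((σ i : ℕ) : ℤ)) := by
      rw [← Finset.sum_sub_distrib, ← Finset.sum_add_distrib]
      refine Finset.sum_congr rfl (fun i _ => ?_)
      simp only [he]
      ring
    have h2 : (∑ i : Fin ν.length, (ν.get (σ i) : ℤ))
        = ∑ m : Fin ν.length, (ν.get m : ℤ) :=
      Equiv.sum_comp σ (fun m => (ν.get m : ℤ))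
    have h3 : (∑ i : Fin ν.length, ((σ i : ℕ) : ℤ))
        = ∑ i : Fin ν.length, ((i : ℕ) : ℤ) :=
      Equiv.sum_comp σ (fun m : Fin ν.length => ((m : ℕ) : ℤ))
    rw [h1, h2, h3, hsum_get]
    ring
  have htot : (List.ofFn f).sum = ν.sum := by
    have h : ((List.ofFn f).sum : ℤ) = (ν.sum : ℤ) := by
      rw [List.sum_ofFn, Nat.cast_sum]
      rw [show (∑ i : Fin ν.length, (f i : ℤ)) = ∑ i : Fin ν.length, e i from
        Finset.sum_congr rfl (fun i _ => hef i)]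
      exact hsumeZ
    exact_mod_cast h
  have hcsum : c.sum = ν.sum := by rw [hcperm.sum_eq, htot]
  have hμsum : μ.sum = ν.sum := by rw [hμdef, filter_pos_sum, hcsum]
  -- the selection estimate
  have hkey : ∀ j, j ≤ ν.length →
      ((ν.take j).sum ≤ (c.take j).sum ∧
        ((Finset.univ.filter (fun i : Fin ν.length => (σ i : ℕ) < j)).image Fin.val
            ≠ Finset.range j → (ν.take j).sum < (c.take j).sum)) := by
    intro j hj
    set T : Finset (Fin ν.length) := Finset.univ.filter (fun i => (σ i : ℕ) < j) with hT
    set S : Finset (Fin ν.length) := Finset.univ.filter (fun m => (m : ℕ) < j) with hS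
    have hSimg : S.image Fin.val = Finset.range j := by
      ext m
      constructor
      · intro hm
        obtain ⟨x, hx, hxv⟩ := Finset.mem_image.mp hm
        have := (Finset.mem_filter.mp hx).2
        rw [Finset.mem_range]; omega
      · intro hm
        rw [Finset.mem_range] at hm
        exact Finset.mem_image.mpr ⟨⟨m, lt_of_lt_of_le hm hj⟩,
          Finset.mem_filter.mpr ⟨Finset.mem_univ _, hm⟩, rfl⟩
    have hScard : S.card = j := by
      rw [← Finset.card_image_of_injective S Fin.val_injective, hSimg, Finset.card_range]
    have hTcard : T.card = j := by
      rw [hT, perm_filter_card σ j, ← hS, hScard]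
    have hTget : (∑ i ∈ T, (ν.get (σ i) : ℤ)) = ∑ m ∈ S, (ν.get m : ℤ) :=
      perm_filter_sum σ j (fun m => (ν.get m : ℤ))
    have hTsig : (∑ i ∈ T, ((σ i : ℕ) : ℤ)) = ∑ m ∈ S, ((m : ℕ) : ℤ) :=
      perm_filter_sum σ j (fun m : Fin ν.length => ((m : ℕ) : ℤ))
    have hSsum : ((ν.take j).sum : ℤ) = ∑ m ∈ S, (ν.get m : ℤ) := by
      rw [take_sum_eq_fin ν j, hS, Finset.sum_filter]
    have hTidx : (∑ m ∈ Finset.range j, (m : ℤ)) ≤ (∑ i ∈ T, ((i : ℕ) : ℤ)) ∧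
        (T.image Fin.val ≠ Finset.range j →
          (∑ m ∈ Finset.range j, (m : ℤ)) < ∑ i ∈ T, ((i : ℕ) : ℤ)) := by
      have hTimg : T.card = (T.image Fin.val).card :=
        (Finset.card_image_of_injective T Fin.val_injective).symm
      obtain ⟨hle, hlt⟩ := sum_range_le j (T.image Fin.val) (by omega)
      have hsum_img : (∑ m ∈ T.image Fin.val, m) = ∑ i ∈ T, (i : ℕ) :=
        Finset.sum_image (fun x _ y _ h => Fin.val_injective h)
      constructor
      · calc (∑ m ∈ Finset.range j, (m : ℤ))
            = ((∑ m ∈ Finset.range j, m : ℕ) : ℤ) := by rw [Nat.cast_sum]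
          _ ≤ ((∑ m ∈ T.image Fin.val, m : ℕ) : ℤ) := by exact_mod_cast hle
          _ = ∑ i ∈ T, ((i : ℕ) : ℤ) := by rw [hsum_img, Nat.cast_sum]
      · intro hne'
        calc (∑ m ∈ Finset.range j, (m : ℤ))
            = ((∑ m ∈ Finset.range j, m : ℕ) : ℤ) := by rw [Nat.cast_sum]
          _ < ((∑ m ∈ T.image Fin.val, m : ℕ) : ℤ) := by exact_mod_cast hlt hne'
          _ = ∑ i ∈ T, ((i : ℕ) : ℤ) := by rw [hsum_img, Nat.cast_sum]
    have hSidx : (∑ m ∈ S, ((m : ℕ) : ℤ)) = ∑ m ∈ Finset.range j, (m : ℤ) := by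
      rw [← hSimg]
      rw [Finset.sum_image (fun x _ y _ h => Fin.val_injective h)]
    have hTe : (∑ i ∈ T, (f i : ℤ))
        = (∑ m ∈ S, (ν.get m : ℤ))
          + ((∑ i ∈ T, ((i : ℕ) : ℤ)) - ∑ m ∈ S, ((m : ℕ) : ℤ)) := by
      have h1 : (∑ i ∈ T, (f i : ℤ)) = ∑ i ∈ T, e i :=
        Finset.sum_congr rfl (fun i _ => hef i)
      have h2 : (∑ i ∈ T, e i)
          = (∑ i ∈ T, (ν.get (σ i) : ℤ))
            + ((∑ i ∈ T, ((i : ℕ) : ℤ)) - ∑ i ∈ T, ((σ i : ℕ) : ℤ)) := by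
        rw [← Finset.sum_sub_distrib, ← Finset.sum_add_distrib]
        refine Finset.sum_congr rfl (fun i _ => ?_)
        simp only [he]
        ring
      rw [h1, h2, hTget, hTsig]
    have hupper : (Multiset.map f T.val).sum ≤ (c.take j).sum := by
      apply sum_le_take_sorted c (sortD_sorted _) j (Multiset.map f T.val)
      · have h1 : (c : Multiset ℕ) = ↑(List.ofFn f) := Multiset.coe_eq_coe.mpr hcperm
        rw [h1, ← Fin.univ_val_map]
        exact Multiset.map_le_map (Finset.val_le_iff.mpr (Finset.subset_univ T))
      · rw [Multiset.card_map]
        rw [show Multiset.card T.val = T.card from rfl, hTcard]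
    have hupper' : (∑ i ∈ T, (f i : ℤ)) ≤ ((c.take j).sum : ℤ) := by
      have h0 : (∑ i ∈ T, f i) = (Multiset.map f T.val).sum :=
        Finset.sum_eq_multiset_sum T f
      calc (∑ i ∈ T, (f i : ℤ)) = ((∑ i ∈ T, f i : ℕ) : ℤ) := by rw [Nat.cast_sum]
        _ ≤ _ := by rw [h0]; exact_mod_cast hupper
    constructor
    · have h : ((ν.take j).sum : ℤ) ≤ ((c.take j).sum : ℤ) := by
        rw [hSsum]
        calc (∑ m ∈ S, (ν.get m : ℤ))
            ≤ (∑ m ∈ S, (ν.get m : ℤ))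
              + ((∑ i ∈ T, ((i : ℕ) : ℤ)) - ∑ m ∈ S, ((m : ℕ) : ℤ)) := by
              have h4 := hTidx.1
              rw [← hSidx] at h4
              omega
          _ = ∑ i ∈ T, (f i : ℤ) := hTe.symm
          _ ≤ _ := hupper'
      exact_mod_cast h
    · intro hne'
      have h : ((ν.take j).sum : ℤ) < ((c.take j).sum : ℤ) := by
        rw [hSsum]
        calc (∑ m ∈ S, (ν.get m : ℤ))
            < (∑ m ∈ S, (ν.get m : ℤ))
              + ((∑ i ∈ T, ((i : ℕ) : ℤ)) - ∑ m ∈ S, ((m : ℕ) : ℤ)) := by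
              have h4 := hTidx.2 hne'
              rw [← hSidx] at h4
              omega
          _ = ∑ i ∈ T, (f i : ℤ) := hTe.symm
          _ ≤ _ := hupper'
      exact_mod_cast h
  -- μ is a prefix of c with the same total sum
  obtain ⟨m0, hm0⟩ := filter_pos_prefix c (sortD_sorted _)
  have hμc : ∀ j, (c.take j).sum ≤ (μ.take j).sum := by
    intro j
    by_cases hjμ : j ≤ μ.length
    · have hm0' : μ = c.take m0 := by rw [hμdef]; exact hm0
      have hμj : μ.take j = c.take j := by
        rw [hm0', List.take_take]
        congr 1
        have hlen2 : μ.length = min m0 c.length := by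
          rw [hm0', List.length_take]
        omega
      rw [hμj]
    · push_neg at hjμ
      rw [List.take_of_length_le (le_of_lt hjμ)]
      calc (c.take j).sum ≤ c.sum := take_sum_le_sum c j
        _ = μ.sum := by rw [hcsum, hμsum]
  have hμlen : μ.length ≤ ν.length := by
    rw [hμdef]
    calc (c.filter _).length ≤ c.length := List.length_filter_le _ _
      _ = ν.length := hclen
  -- good and strict
  apply Submodule.subset_span
  refine ⟨μ, ⟨⟨?_, ?_⟩, ?_, hμsum, ?_⟩, ?_, rfl⟩
  · exact List.Pairwise.filter _ (sortD_sorted _)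
  · intro x hx
    have h := List.of_mem_filter hx
    simpa using h
  · intro x hx
    have hxc : x ∈ c := List.mem_of_mem_filter hx
    have hxf : x ∈ List.ofFn f := hcperm.mem_iff.mp hxc
    obtain ⟨i, hi⟩ := List.mem_ofFn.mp hxf
    rw [← hi]
    exact hfk i
  · -- dominance
    intro j
    by_cases hj : j ≤ ν.length
    · exact le_trans (hkey j hj).1 (hμc j)
    · push_neg at hj
      rw [List.take_of_length_le (by omega : ν.length ≤ j)]
      rw [List.take_of_length_le (by omega : μ.length ≤ j)]
      omega
  · -- strictness
    obtain ⟨j, hjle, hjne⟩ := exists_strict_set σ hσ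
    refine ⟨j, ?_⟩
    exact lt_of_lt_of_le ((hkey j hjle).2 hjne) (hμc j)

/-- The key per-block triangularity lemma. -/
lemma schur_block (k : ℕ) {ν : List ℕ} (hν : IsPartition ν) (hne : ν ≠ [])
    (hmh : mainHook ν ≤ k) : schur ν - hProd ν ∈ SSp k ν := by
  classical
  have hdet : schur ν = ∑ σ : Equiv.Perm (Fin ν.length),
      Equiv.Perm.sign σ • ∏ i : Fin ν.length,
        hZ ((ν.get (σ i) : ℤ) - ((σ i : ℕ) : ℤ) + ((i : ℕ) : ℤ)) := by
    rw [schur, Matrix.det_apply]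
    rfl
  have hid : (∏ i : Fin ν.length,
      hZ ((ν.get ((1 : Equiv.Perm (Fin ν.length)) i) : ℤ)
        - (((1 : Equiv.Perm (Fin ν.length)) i : ℕ) : ℤ) + ((i : ℕ) : ℤ))) = hProd ν := by
    have h1 : ∀ i : Fin ν.length,
        hZ ((ν.get ((1 : Equiv.Perm (Fin ν.length)) i) : ℤ)
          - (((1 : Equiv.Perm (Fin ν.length)) i : ℕ) : ℤ) + ((i : ℕ) : ℤ))
          = hh (ν.get i) := by
      intro i
      have h2 : ((1 : Equiv.Perm (Fin ν.length)) i) = i := rfl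
      rw [h2]
      have h3 : ((ν.get i : ℤ) - ((i : ℕ) : ℤ) + ((i : ℕ) : ℤ)) = (ν.get i : ℤ) := by ring
      rw [h3, hZ, if_neg (by omega : ¬ ((ν.get i : ℤ) < 0)), Int.toNat_natCast]
    rw [Finset.prod_congr rfl (fun i _ => h1 i)]
    conv_rhs => rw [hProd, ← List.ofFn_get ν, List.map_ofFn, List.prod_ofFn]
    rfl
  have hsplit : schur ν = hProd ν
      + ∑ σ ∈ Finset.univ.erase (1 : Equiv.Perm (Fin ν.length)),
          Equiv.Perm.sign σ • ∏ i : Fin ν.length,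
            hZ ((ν.get (σ i) : ℤ) - ((σ i : ℕ) : ℤ) + ((i : ℕ) : ℤ)) := by
    rw [hdet, ← Finset.add_sum_erase _ _ (Finset.mem_univ (1 : Equiv.Perm (Fin ν.length)))]
    congr 1
    rw [Equiv.Perm.sign_one, one_smul, hid]
  rw [hsplit, add_sub_cancel_left]
  apply Submodule.sum_mem
  intro σ hσ
  have hσ1 : σ ≠ 1 := (Finset.mem_erase.mp hσ).1
  rw [Units.smul_def]
  exact Submodule.smul_mem _ _ (perm_term_mem k hν hne hmh σ hσ1)

lemma kBounded_flatten {k : ℕ} {B : List (List ℕ)}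
    (hblocks : ∀ ν ∈ B, ν ≠ [] ∧ mainHook ν ≤ k) (hpart : IsPartition B.flatten) :
    KBounded k B.flatten := by
  intro x hx
  obtain ⟨ν, hνB, hxν⟩ := List.mem_flatten.mp hx
  obtain ⟨hne, hmh⟩ := hblocks ν hνB
  have hsort : ν.Pairwise (· ≥ ·) := List.Pairwise.sublist (List.sublist_flatten_of_mem hνB) hpart.1
  exact kBounded_of_mainHook
    ⟨hsort, fun y hy => hpart.2 y (List.mem_flatten.mpr ⟨ν, hνB, hy⟩)⟩ hne hmh x hxν

lemma prod_schur_blocks (k : ℕ) :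
    ∀ B : List (List ℕ), (∀ ν ∈ B, ν ≠ [] ∧ mainHook ν ≤ k) → IsPartition B.flatten →
      (B.map schur).prod - hProd B.flatten ∈ SSp k B.flatten := by
  intro B
  induction B with
  | nil =>
      intro _ _
      have : hProd ([] : List (List ℕ)).flatten = 1 := by simp [hProd]
      rw [List.map_nil, List.prod_nil, this, sub_self]
      exact zero_mem _
  | cons ν B ih =>
      intro hblocks hpart
      have hflat : (ν :: B).flatten = ν ++ B.flatten := rfl
      rw [hflat] at hpart ⊢
      have hν : IsPartition ν := isPartition_append_left hpart
      have hpart' : IsPartition B.flatten := isPartition_append_right hpart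
      obtain ⟨hne, hmh⟩ := hblocks ν List.mem_cons_self
      have hblocks' : ∀ ν' ∈ B, ν' ≠ [] ∧ mainHook ν' ≤ k := fun ν' h =>
        hblocks ν' (List.mem_cons_of_mem _ h)
      have hνk : KBounded k ν := kBounded_of_mainHook hν hne hmh
      have hflk : KBounded k B.flatten := kBounded_flatten hblocks' hpart'
      have hsmem : schur ν - hProd ν ∈ SSp k ν := schur_block k hν hne hmh
      have htmem : (B.map schur).prod - hProd B.flatten ∈ SSp k B.flatten :=
        ih hblocks' hpart'
      have hwν : hProd ν ∈ WSp k ν :=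
        Submodule.subset_span ⟨ν, goodW_self hν hνk, rfl⟩
      have hwfl : hProd B.flatten ∈ WSp k B.flatten :=
        Submodule.subset_span ⟨B.flatten, goodW_self hpart' hflk, rfl⟩
      have hexp : ((ν :: B).map schur).prod - hProd (ν ++ B.flatten)
          = hProd ν * ((B.map schur).prod - hProd B.flatten)
            + (schur ν - hProd ν) * hProd B.flatten
            + (schur ν - hProd ν) * ((B.map schur).prod - hProd B.flatten) := by
        rw [List.map_cons, List.prod_cons, hProd_append]
        ring
      rw [hexp]
      exact add_mem (add_mem (mul_mem_SSp hwν htmem) (mul_mem_SSp' hsmem hwfl))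
        (mul_mem_SSp' hsmem (SSp_le_WSp k _ htmem))


lemma kSplitAux_spec (k : ℕ) (hk : 1 ≤ k) :
    ∀ (fuel : ℕ) (l : List ℕ), l.length ≤ fuel → IsPartition l → KBounded k l →
      (kSplitAux k fuel l).flatten = l ∧
      ∀ ν ∈ kSplitAux k fuel l, ν ≠ [] ∧ mainHook ν ≤ k := by
  intro fuel
  induction fuel with
  | zero =>
      intro l hlen _ _
      have hl : l = [] := List.length_eq_zero_iff.mp (Nat.le_zero.mp hlen)
      subst hl
      exact ⟨rfl, by intro ν hν; simp [kSplitAux] at hν⟩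
  | succ fuel ih =>
      intro l hlen hpart hbdd
      cases l with
      | nil => exact ⟨rfl, by intro ν hν; simp [kSplitAux] at hν⟩
      | cons a rest =>
          have ha : a ≤ k := hbdd a List.mem_cons_self
          have hm : 1 ≤ k + 1 - a := by omega
          rw [kSplitAux]
          by_cases hcond : (a :: rest).length ≤ k + 1 - a ∨ k + 1 - a = 0
          · rw [if_pos hcond]
            have hlen2 : (a :: rest).length ≤ k + 1 - a := by
              rcases hcond with h | h
              · exact h
              · omega
            refine ⟨by simp, ?_⟩
            intro ν hν
            have hν' : ν = a :: rest := by simpa using hν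
            subst hν'
            refine ⟨by simp, ?_⟩
            unfold mainHook
            have h1 : (a :: rest).headI = a := rfl
            have h2 : 1 ≤ (a :: rest).length := by simp
            omega
          · rw [if_neg hcond]
            push_neg at hcond
            obtain ⟨hlong, _⟩ := hcond
            have hdroplen : ((a :: rest).drop (k + 1 - a)).length ≤ fuel := by
              rw [List.length_drop]
              omega
            have hdpart : IsPartition ((a :: rest).drop (k + 1 - a)) :=
              ⟨List.Pairwise.sublist (List.drop_sublist _ _) hpart.1,
               fun x hx => hpart.2 x (List.mem_of_mem_drop hx)⟩
            have hdbdd : KBounded k ((a :: rest).drop (k + 1 - a)) :=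
              fun x hx => hbdd x (List.mem_of_mem_drop hx)
            obtain ⟨hjoin, hbl⟩ := ih _ hdroplen hdpart hdbdd
            constructor
            · rw [List.flatten_cons, hjoin, List.take_append_drop]
            · intro ν hν
              rcases List.mem_cons.mp hν with h | h
              · subst h
                constructor
                · intro hnil
                  have := congrArg List.length hnil
                  rw [List.length_take] at this
                  simp at this
                  omega
                · have htake : (a :: rest).take (k + 1 - a)
                      = a :: rest.take (k + 1 - a - 1) := by
                    have hm' : k + 1 - a = (k + 1 - a - 1) + 1 := by omega
                    conv_lhs => rw [hm', List.take_succ_cons]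
                  rw [htake]
                  unfold mainHook
                  have h1 : (a :: rest.take (k + 1 - a - 1)).headI = a := rfl
                  have h2 : (a :: rest.take (k + 1 - a - 1)).length
                      = (rest.take (k + 1 - a - 1)).length + 1 := by simp
                  rw [h1, h2]
                  have h3 : (rest.take (k + 1 - a - 1)).length ≤ k + 1 - a - 1 := by
                    rw [List.length_take]; omega
                  omega
              · exact hbl ν h

/-- For any `k`-bounded partition `λ`, the `k`-split polynomial
expands unitriangularly in the homogeneous basis with integer coefficients and
`k`-bounded indices: `G_λ^{(k)} = h_λ + Σ_{μ > λ, μ₁ ≤ k} g_{λμ}^{(k)} h_μ`. -/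
theorem Gk_h_unitriangular (k : ℕ) (hk : 1 ≤ k) (l : List ℕ)
    (hl : IsPartition l) (hb : KBounded k l) :
    ∃ (A : Finset (List ℕ)) (g : List ℕ → ℤ),
      (∀ μ ∈ A, IsPartition μ ∧ KBounded k μ ∧ μ.sum = l.sum ∧ Dominates μ l ∧ μ ≠ l) ∧
      Gk k l = hProd l + ∑ μ ∈ A, (g μ : ℚ) • hProd μ := by
  classical
  obtain ⟨hjoin, hblocks⟩ := kSplitAux_spec k hk l.length l le_rfl hl hb
  have hmem : Gk k l - hProd l ∈ SSp k l := by
    have h := prod_schur_blocks k (kSplitAux k l.length l) hblocks (by rwa [hjoin])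
    rw [hjoin] at h
    exact h
  obtain ⟨c, hsupp, hsum⟩ := Submodule.mem_span_set.mp hmem
  set w : SymFn → List ℕ := fun f =>
    if h : ∃ μ, (GoodW k l μ ∧ StrictP l μ) ∧ f = hProd μ then h.choose else [] with hwdef
  have hw : ∀ f ∈ c.support, (GoodW k l (w f) ∧ StrictP l (w f)) ∧ f = hProd (w f) := by
    intro f hf
    have hfs : f ∈ {f : SymFn | ∃ μ, GoodW k l μ ∧ StrictP l μ ∧ f = hProd μ} := hsupp hf
    rw [Set.mem_setOf_eq] at hfs
    have hfs' : ∃ μ, (GoodW k l μ ∧ StrictP l μ) ∧ f = hProd μ := by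
      obtain ⟨μ, h1, h2, h3⟩ := hfs
      exact ⟨μ, ⟨h1, h2⟩, h3⟩
    rw [hwdef]
    simp only [dif_pos hfs']
    exact hfs'.choose_spec
  refine ⟨c.support.image w, fun μ => c (hProd μ), ?_, ?_⟩
  · intro μ hμ
    obtain ⟨f, hf, rfl⟩ := Finset.mem_image.mp hμ
    obtain ⟨⟨⟨hp, hkb, hs, hd⟩, ⟨j, hstrict⟩⟩, _⟩ := hw f hf
    refine ⟨hp, hkb, hs, hd, ?_⟩
    intro heq
    rw [heq] at hstrict
    exact lt_irrefl _ hstrict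
  · have hinj : ∀ f ∈ c.support, ∀ g ∈ c.support, w f = w g → f = g := by
      intro f hf g hg hwfg
      obtain ⟨_, hfe⟩ := hw f hf
      obtain ⟨_, hge⟩ := hw g hg
      rw [hfe, hge, hwfg]
    have himg : (∑ μ ∈ c.support.image w, ((c (hProd μ) : ℚ)) • hProd μ)
        = ∑ f ∈ c.support, ((c f : ℚ)) • f := by
      rw [Finset.sum_image hinj]
      apply Finset.sum_congr rfl
      intro f hf
      obtain ⟨_, hfe⟩ := hw f hf
      rw [← hfe]
    rw [himg]
    have hfin : (∑ f ∈ c.support, ((c f : ℚ)) • f) = Gk k l - hProd l := by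
      rw [← hsum, Finsupp.sum]
      apply Finset.sum_congr rfl
      intro f _
      exact Int.cast_smul_eq_zsmul ℚ (c f) f
    rw [hfin]
    ring
end
end

section
/- If λ is a k-bounded partition with main hook-length h_M(λ) ≤ k, then the k-Schur function equals the Schur function: s_λ^{(k)} = s_λ. -/
open scoped BigOperators Classical

noncomputable section

/-- The `k`-Schur functions (at `t = 1`), defined recursively from a family `T`
of projection operators by `s_λ^{(k)} = T_{λ₁} (s_{λ₁} ⋅ s_{(λ₂,λ₃,…)}^{(k)})`,
starting from `s_{()}^{(k)} = 1`. -/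
def kSchurWith (T : ℕ → (SymFn →ₗ[ℚ] SymFn)) : List ℕ → SymFn
  | [] => 1
  | a :: rest => T a (schur [a] * kSchurWith T rest)

/-- `T` is a family of projection operators for `Λ^{(k)}`:
`T_j G_λ^{(k)} = G_λ^{(k)}` if `λ₁ = j` and `0` otherwise, for every
`k`-bounded partition `λ`.  (Any such family restricts to the projection
operator of Lapointe–Morse on `Λ^{(k)}`.) -/
def ProjOps (k : ℕ) (T : ℕ → (SymFn →ₗ[ℚ] SymFn)) : Prop :=
  ∀ (j : ℕ) (l : List ℕ), IsPartition l → KBounded k l →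
    T j (Gk k l) = if l.headI = j then Gk k l else 0


/-! ### Auxiliary machinery -/

namespace KSAux

lemma hZ_ofNat (n : ℕ) : hZ (n : ℤ) = hh n := by simp [hZ]

/-- Product of `hh` over a multiset of indices. -/
def hm (m : Multiset ℕ) : SymFn := (m.map hh).prod

lemma hm_coe (l : List ℕ) : hm ↑l = hProd l := rfl

lemma hm_add (m₁ m₂ : Multiset ℕ) : hm (m₁ + m₂) = hm m₁ * hm m₂ := by
  simp [hm]

lemma hm_cons (b : ℕ) (m : Multiset ℕ) : hm (b ::ₘ m) = hh b * hm m := by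
  simp [hm]

/-- The quadratic weight of a multiset. -/
def wgt (m : Multiset ℕ) : ℕ := (m.map fun x => x * x).sum

lemma wgt_add (m₁ m₂ : Multiset ℕ) : wgt (m₁ + m₂) = wgt m₁ + wgt m₂ := by
  simp [wgt]

/-- All parts positive and at most `k`. -/
def OKm (k : ℕ) (m : Multiset ℕ) : Prop := ∀ x ∈ m, 0 < x ∧ x ≤ k

lemma finProd {M : Type*} [CommMonoid M] (f : ℕ → M) :
    ∀ (l : List ℕ), ∏ i : Fin l.length, f (l.get i) = (l.map f).prod := by
  intro l
  induction l with
  | nil => simp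
  | cons a t ih =>
    rw [List.map_cons, List.prod_cons, ← ih]
    show ∏ i : Fin (t.length+1), f ((a::t).get i) = _
    rw [Fin.prod_univ_succ]
    rfl

lemma finSum {M : Type*} [AddCommMonoid M] (f : ℕ → M) (l : List ℕ) :
    ∑ i : Fin l.length, f (l.get i) = (l.map f).sum := by
  induction l with
  | nil => simp
  | cons a t ih =>
    rw [List.map_cons, List.sum_cons, ← ih]
    show ∑ i : Fin (t.length+1), f ((a::t).get i) = _
    rw [Fin.sum_univ_succ]
    rfl

lemma wgt_cons (b : ℕ) (m : Multiset ℕ) : wgt (b ::ₘ m) = b * b + wgt m := by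
  simp [wgt]

lemma listSumZ (l : List ℕ) : ∑ i : Fin l.length, ((l.get i : ℕ) : ℤ) = (l.sum : ℤ) := by
  rw [finSum (fun x : ℕ => (x : ℤ)) l]
  induction l with
  | nil => simp
  | cons a t ih =>
    rw [List.map_cons, List.sum_cons, List.sum_cons, ih]
    push_cast
    ring

lemma wgtZ (l : List ℕ) : ((wgt ↑l : ℕ) : ℤ) = ∑ i : Fin l.length, ((l.get i : ℕ) : ℤ) ^ 2 := by
  rw [finSum (fun x : ℕ => ((x : ℤ)) ^ 2) l]
  induction l with
  | nil => simp [wgt]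
  | cons a t ih =>
    rw [List.map_cons, List.sum_cons,
      show ((a :: t : List ℕ) : Multiset ℕ) = a ::ₘ (↑t) from (Multiset.cons_coe a t).symm,
      wgt_cons]
    push_cast [← ih]
    ring

lemma le_headI {l : List ℕ} (hs : l.Pairwise (· ≥ ·)) {x : ℕ} (hx : x ∈ l) : x ≤ l.headI := by
  induction l with
  | nil => simp at hx
  | cons a t ih =>
    rcases List.mem_cons.mp hx with h | h
    · simp [h]
    · exact (List.rel_of_pairwise_cons hs h)

lemma get_zero_eq_headI (l : List ℕ) (h : 0 < l.length) : l.get ⟨0, h⟩ = l.headI := by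
  cases l with
  | nil => simp at h
  | cons a t => rfl

lemma perm_eq_one_of_antivary {n : ℕ} (x : Fin n → ℤ)
    (hx : ∀ i j : Fin n, i < j → x j < x i) (τ : Equiv.Perm (Fin n))
    (h : Antivary (x ∘ τ) (fun i : Fin n => (i : ℤ))) : τ = 1 := by
  have key : ∀ m : ℕ, ∀ i : Fin n, (i : ℕ) = m → τ i = i := by
    intro m
    induction m using Nat.strong_induction_on with
    | _ m ih =>
      intro i him
      by_contra hne
      have hfix : ∀ j : Fin n, j < i → τ j = j := by
        intro j hj
        have hji : (j : ℕ) < (i : ℕ) := hj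
        exact ih (j : ℕ) (by omega) j rfl
      have h1 : i < τ i := by
        rcases lt_trichotomy (τ i) i with hlt | heq | hgt
        · exact absurd (τ.injective (hfix (τ i) hlt)) hne
        · exact absurd heq hne
        · exact hgt
      have h2 : i < τ.symm i := by
        rcases lt_trichotomy (τ.symm i) i with hlt | heq | hgt
        · have := hfix (τ.symm i) hlt
          rw [Equiv.apply_symm_apply] at this
          exact absurd hlt (by rw [← this]; exact lt_irrefl i)
        · have : τ i = i := by
            conv_lhs => rw [← heq]
            exact τ.apply_symm_apply i
          exact absurd this hne
        · exact hgt
      have h3 : x (τ (τ.symm i)) ≤ x (τ i) := by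
        refine h ?_
        show ((i:ℕ):ℤ) < (((τ.symm i):ℕ):ℤ)
        exact_mod_cast h2
      rw [Equiv.apply_symm_apply] at h3
      exact absurd h3 (not_le.mpr (hx i (τ i) h1))
  ext i
  simp [key (i : ℕ) i rfl]

lemma rearr_lt {n : ℕ} (x : Fin n → ℤ) (hx : ∀ i j : Fin n, i < j → x j < x i)
    (τ : Equiv.Perm (Fin n)) (hτ : τ ≠ 1) :
    ∑ i, x i * (i : ℤ) < ∑ i, x (τ i) * (i : ℤ) := by
  have hav : Antivary x (fun i : Fin n => (i : ℤ)) := by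
    intro i j hij
    have hij0 : ((i:ℕ):ℤ) < ((j:ℕ):ℤ) := hij
    have hij' : (i : ℕ) < (j : ℕ) := by exact_mod_cast hij0
    exact (hx i j hij').le
  rw [hav.sum_mul_lt_sum_comp_perm_mul_iff]
  intro hcontra
  exact hτ (perm_eq_one_of_antivary x hx τ hcontra)

lemma key_ineq {n : ℕ} (b : Fin n → ℤ) (hb : ∀ i j : Fin n, i ≤ j → b j ≤ b i)
    (τ : Equiv.Perm (Fin n)) (hτ : τ ≠ 1) :
    ∑ i, b i ^ 2 < ∑ i, (b (τ i) - ((τ i : ℕ) : ℤ) + ((i : ℕ) : ℤ)) ^ 2 := by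
  set x : Fin n → ℤ := fun j => b j - ((j : ℕ) : ℤ) with hxdef
  have hx : ∀ i j : Fin n, i < j → x j < x i := by
    intro i j hij
    have h1 := hb i j hij.le
    have h2 : ((i:ℕ):ℤ) < ((j:ℕ):ℤ) := by exact_mod_cast Fin.lt_iff_val_lt_val.mp hij
    simp only [x]
    omega
  have expand : ∀ y : Fin n → ℤ,
      ∑ i, (y i + ((i:ℕ):ℤ)) ^ 2
        = ∑ i, (y i ^ 2 + ((i:ℕ):ℤ) ^ 2) + 2 * ∑ i, y i * ((i:ℕ):ℤ) := by
    intro y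
    rw [Finset.mul_sum, ← Finset.sum_add_distrib]
    exact Finset.sum_congr rfl fun i _ => by ring
  have e1 : ∑ i, b i ^ 2 = ∑ i, (x i + ((i:ℕ):ℤ)) ^ 2 :=
    Finset.sum_congr rfl fun i _ => by simp [x]
  have e2 : ∑ i, (b (τ i) - ((τ i : ℕ) : ℤ) + ((i : ℕ) : ℤ)) ^ 2
      = ∑ i, (x (τ i) + ((i:ℕ):ℤ)) ^ 2 :=
    Finset.sum_congr rfl fun i _ => by simp [x]
  have e3 : ∑ i, (x (τ i)) ^ 2 = ∑ i, x i ^ 2 := Equiv.sum_comp τ fun j => x j ^ 2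
  have e4 : ∑ i, ((x (τ i)) ^ 2 + ((i:ℕ):ℤ)^2) = ∑ i, (x i ^ 2 + ((i:ℕ):ℤ)^2) := by
    rw [Finset.sum_add_distrib, Finset.sum_add_distrib, e3]
  have e5 := rearr_lt x hx τ hτ
  rw [e1, e2, expand, expand, e4]
  linarith

/-! ### Span machinery -/

def Wset (k n w b : ℕ) : Set SymFn :=
  {f | ∃ m : Multiset ℕ, OKm k m ∧ m.sum = n ∧ w < wgt m ∧ (∃ x ∈ m, b ≤ x) ∧ f = hm m}

def Wspan (k n w b : ℕ) : Submodule ℚ SymFn := Submodule.span ℚ (Wset k n w b)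

def S0set (k : ℕ) : Set SymFn := {f | ∃ m : Multiset ℕ, OKm k m ∧ f = hm m}

def S0 (k : ℕ) : Submodule ℚ SymFn := Submodule.span ℚ (S0set k)

def Hset (k a : ℕ) : Set SymFn := {f | ∃ m, OKm k m ∧ (∃ x ∈ m, a < x) ∧ f = hm m}

def Hspan (k a : ℕ) : Submodule ℚ SymFn := Submodule.span ℚ (Hset k a)

def Gset (k a : ℕ) : Set SymFn :=
  {f | ∃ l, IsPartition l ∧ KBounded k l ∧ a < l.headI ∧ f = Gk k l}

def Gspan (k a : ℕ) : Submodule ℚ SymFn := Submodule.span ℚ (Gset k a)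

/-- Analysis of a single determinant monomial `∏ i, hZ (c i)`. -/
lemma prod_hZ_mem (k : ℕ) {n : ℕ} (c : Fin n → ℤ) (hc : ∀ i, c i ≤ (k : ℤ)) :
    (∏ i, hZ (c i)) = 0 ∨
      ∃ m : Multiset ℕ, OKm k m ∧ ((m.sum : ℕ) : ℤ) = ∑ i, c i ∧
        ((wgt m : ℕ) : ℤ) = ∑ i, (c i) ^ 2 ∧
        (∀ (i : Fin n) (v : ℕ), (v : ℤ) ≤ c i → 0 < v → ∃ x ∈ m, v ≤ x) ∧
        (∏ i, hZ (c i)) = hm m := by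
  by_cases hpos : ∀ i, 0 ≤ c i
  · right
    set g : Fin n → ℕ := fun i => (c i).toNat with hg
    set m₀ : Multiset ℕ := Multiset.map g Finset.univ.val with hm₀
    set m : Multiset ℕ := m₀.filter (fun x => 0 < x) with hmdef
    have hsplit : m₀ = m + m₀.filter (fun x => ¬ 0 < x) := (Multiset.filter_add_not _ m₀).symm
    have hzero : ∀ x ∈ m₀.filter (fun x => ¬ 0 < x), x = 0 := by
      intro x hx
      have := Multiset.of_mem_filter hx
      omega
    have hcast : ∀ i, ((g i : ℕ) : ℤ) = c i := fun i => Int.toNat_of_nonneg (hpos i)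
    have hsum₀ : m₀.sum = ∑ i, g i := by rw [Finset.sum]
    have hwgt₀ : wgt m₀ = ∑ i, g i * g i := by
      rw [Finset.sum, wgt, hm₀, Multiset.map_map]
      rfl
    have hsum : m.sum = m₀.sum := by
      conv_rhs => rw [hsplit]
      rw [Multiset.sum_add, Multiset.sum_eq_zero hzero, add_zero]
    have hwgt : wgt m = wgt m₀ := by
      conv_rhs => rw [hsplit]
      rw [wgt_add, show wgt (m₀.filter (fun x => ¬ 0 < x)) = 0 from ?_, add_zero]
      rw [wgt]
      refine Multiset.sum_eq_zero ?_
      intro y hy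
      rcases Multiset.mem_map.mp hy with ⟨x, hx, rfl⟩
      simp [hzero x hx]
    refine ⟨m, ?_, ?_, ?_, ?_, ?_⟩
    · intro x hx
      refine ⟨Multiset.of_mem_filter hx, ?_⟩
      have hx₀ : x ∈ m₀ := Multiset.mem_of_mem_filter hx
      rcases Multiset.mem_map.mp hx₀ with ⟨i, _, rfl⟩
      exact Int.toNat_le.mpr (hc i)
    · rw [hsum, hsum₀]
      push_cast
      exact Finset.sum_congr rfl fun i _ => hcast i
    · rw [hwgt, hwgt₀]
      push_cast
      refine Finset.sum_congr rfl fun i _ => ?_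
      rw [← hcast i]
      push_cast
      ring
    · intro i v hv hv0
      refine ⟨g i, ?_, ?_⟩
      · rw [hmdef]
        refine Multiset.mem_filter.mpr ⟨?_, ?_⟩
        · exact Multiset.mem_map.mpr ⟨i, Finset.mem_val.mpr (Finset.mem_univ i), rfl⟩
        · have : (v : ℤ) ≤ ((g i : ℕ) : ℤ) := by rw [hcast i]; exact hv
          have := Int.ofNat_le.mp this
          omega
      · have : (v : ℤ) ≤ ((g i : ℕ) : ℤ) := by rw [hcast i]; exact hv
        exact Int.ofNat_le.mp this
    · have h1 : (∏ i, hZ (c i)) = ∏ i, hh (g i) := by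
        refine Finset.prod_congr rfl fun i _ => ?_
        rw [hZ, if_neg (not_lt.mpr (hpos i))]
      have h2 : (∏ i, hh (g i)) = hm m₀ := by
        rw [Finset.prod, hm, hm₀, Multiset.map_map]
        rfl
      have h3 : hm m₀ = hm m := by
        conv_lhs => rw [hsplit]
        rw [hm_add, show hm (m₀.filter (fun x => ¬ 0 < x)) = 1 from ?_, mul_one]
        rw [hm]
        refine Multiset.prod_eq_one ?_
        intro y hy
        rcases Multiset.mem_map.mp hy with ⟨x, hx, rfl⟩
        rw [hzero x hx]
        rfl
      rw [h1, h2, h3]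
  · left
    push_neg at hpos
    rcases hpos with ⟨i, hi⟩
    refine Finset.prod_eq_zero (Finset.mem_univ i) ?_
    rw [hZ, if_pos (by omega)]

/-- A determinant whose entries are `hZ` of indices at most `k` lies in `S0 k`. -/
lemma det_mem_S0 (k : ℕ) {n : ℕ} (e : Fin n → Fin n → ℤ) (hbd : ∀ i j, e i j ≤ (k : ℤ)) :
    (Matrix.of fun i j : Fin n => hZ (e i j)).det ∈ S0 k := by
  rw [Matrix.det_apply']
  refine Submodule.sum_mem _ fun τ _ => ?_
  have hterm : ∀ i, (Matrix.of fun i j : Fin n => hZ (e i j)) (τ i) i = hZ (e (τ i) i) :=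
    fun i => rfl
  rcases prod_hZ_mem k (fun i => e (τ i) i) (fun i => hbd _ _) with h0 | ⟨m, hOK, _, _, _, hprod⟩
  · have : (∏ i, (Matrix.of fun i j : Fin n => hZ (e i j)) (τ i) i) = 0 := by
      rw [show (∏ i, (Matrix.of fun i j : Fin n => hZ (e i j)) (τ i) i)
        = ∏ i, hZ (e (τ i) i) from rfl]
      exact h0
    rw [this, mul_zero]
    exact Submodule.zero_mem _
  · have hpr : (∏ i, (Matrix.of fun i j : Fin n => hZ (e i j)) (τ i) i) = hm m := hprod
    rw [hpr]
    have hgen : hm m ∈ S0 k := Submodule.subset_span ⟨m, hOK, rfl⟩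
    rcases Int.units_eq_one_or (Equiv.Perm.sign τ) with hs | hs <;> rw [hs]
    · simpa using hgen
    · simpa using Submodule.neg_mem _ hgen

/-- Jacobi–Trudi triangularity: the Schur function minus its leading `h`-monomial
lies in the span of strictly-larger-weight monomials. -/
lemma schur_sub_mem (k : ℕ) (β : List ℕ) (hs : β.Pairwise (· ≥ ·)) (hpos : ∀ x ∈ β, 0 < x)
    (hne : β ≠ []) (hmh : mainHook β ≤ k) :
    schur β - hProd β ∈ Wspan k β.sum (wgt ↑β) β.headI := by
  classical
  have hlen : 0 < β.length := List.length_pos_iff.mpr hne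
  have hbd : β.headI + β.length ≤ k + 1 := by
    unfold mainHook at hmh
    omega
  have hget : ∀ i j : Fin β.length, i ≤ j → β.get j ≤ β.get i := by
    intro i j hij
    rcases eq_or_lt_of_le hij with h | h
    · rw [h]
    · exact List.pairwise_iff_get.mp hs i j h
  rw [show schur β = (Matrix.of fun i j : Fin β.length =>
      hZ (((β.get i : ℕ) : ℤ) - ((i : ℕ) : ℤ) + ((j : ℕ) : ℤ))).det from rfl,
    Matrix.det_apply']
  rw [← Finset.add_sum_erase _ _ (Finset.mem_univ (1 : Equiv.Perm (Fin β.length)))]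
  have hid : ((Equiv.Perm.sign (1 : Equiv.Perm (Fin β.length)) : ℤ) : SymFn)
      * (∏ i, (Matrix.of fun i j : Fin β.length =>
        hZ (((β.get i : ℕ) : ℤ) - ((i : ℕ) : ℤ) + ((j : ℕ) : ℤ))) ((1 : Equiv.Perm (Fin β.length)) i) i)
      = hProd β := by
    rw [Equiv.Perm.sign_one]
    have : ∀ i : Fin β.length, (Matrix.of fun i j : Fin β.length =>
        hZ (((β.get i : ℕ) : ℤ) - ((i : ℕ) : ℤ) + ((j : ℕ) : ℤ))) ((1 : Equiv.Perm (Fin β.length)) i) i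
        = hh (β.get i) := by
      intro i
      show hZ (((β.get i : ℕ) : ℤ) - ((i : ℕ) : ℤ) + ((i : ℕ) : ℤ)) = hh (β.get i)
      rw [sub_add_cancel, hZ_ofNat]
    rw [Finset.prod_congr rfl fun i _ => this i, finProd hh β]
    push_cast
    rw [one_mul]
    rfl
  rw [hid, add_sub_cancel_left]
  refine Submodule.sum_mem _ fun τ hτmem => ?_
  have hτ : τ ≠ 1 := (Finset.mem_erase.mp hτmem).1
  have hterm : (∏ i, (Matrix.of fun i j : Fin β.length =>
      hZ (((β.get i : ℕ) : ℤ) - ((i : ℕ) : ℤ) + ((j : ℕ) : ℤ))) (τ i) i)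
      = ∏ i, hZ (((β.get (τ i) : ℕ) : ℤ) - ((τ i : ℕ) : ℤ) + ((i : ℕ) : ℤ)) := rfl
  have hcbd : ∀ i : Fin β.length,
      ((β.get (τ i) : ℕ) : ℤ) - ((τ i : ℕ) : ℤ) + ((i : ℕ) : ℤ) ≤ (k : ℤ) := by
    intro i
    have h1 : β.get (τ i) ≤ β.headI := le_headI hs (β.get_mem _)
    have h2 : (i : ℕ) < β.length := i.isLt
    have h3 : (0 : ℤ) ≤ ((τ i : ℕ) : ℤ) := by positivity
    have h1' : ((β.get (τ i) : ℕ) : ℤ) ≤ (β.headI : ℤ) := by exact_mod_cast h1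
    have h2' : ((i : ℕ) : ℤ) < (β.length : ℤ) := by exact_mod_cast h2
    have hbd' : (β.headI : ℤ) + (β.length : ℤ) ≤ (k : ℤ) + 1 := by exact_mod_cast hbd
    omega
  rcases prod_hZ_mem k _ hcbd with h0 | ⟨m, hOK, hsum, hwgt, hwit, hprod⟩
  · rw [hterm, h0, mul_zero]
    exact Submodule.zero_mem _
  · rw [hterm, hprod]
    have hgen : hm m ∈ Wset k β.sum (wgt ↑β) β.headI := by
      refine ⟨m, hOK, ?_, ?_, ?_, rfl⟩
      · have e1 : ∑ i, ((β.get (τ i) : ℕ) : ℤ) = ∑ i, ((β.get i : ℕ) : ℤ) :=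
          Equiv.sum_comp τ (fun j => ((β.get j : ℕ) : ℤ))
        have e2 : ∑ i, ((τ i : ℕ) : ℤ) = ∑ i : Fin β.length, ((i : ℕ) : ℤ) :=
          Equiv.sum_comp τ (fun j => ((j : ℕ) : ℤ))
        have e3 : ∑ i, (((β.get (τ i) : ℕ) : ℤ) - ((τ i : ℕ) : ℤ) + ((i : ℕ) : ℤ))
            = ∑ i, ((β.get (τ i) : ℕ) : ℤ) - ∑ i, ((τ i : ℕ) : ℤ)
              + ∑ i : Fin β.length, ((i : ℕ) : ℤ) := by
          rw [Finset.sum_add_distrib, Finset.sum_sub_distrib]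
        have : ((m.sum : ℕ) : ℤ) = ((β.sum : ℕ) : ℤ) := by
          rw [hsum, e3, e1, e2, ← listSumZ]
          ring
        exact_mod_cast this
      · have hkey := key_ineq (fun i => ((β.get i : ℕ) : ℤ))
          (fun i j hij => by exact Int.ofNat_le.mpr (hget i j hij)) τ hτ
        have : ((wgt (↑β : Multiset ℕ) : ℕ) : ℤ) < ((wgt m : ℕ) : ℤ) := by
          rw [hwgt, wgtZ]
          exact hkey
        exact_mod_cast this
      · have h0lt : 0 < β.headI := by
          have := hpos (β.get ⟨0, hlen⟩) (β.get_mem _)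
          rwa [get_zero_eq_headI β hlen] at this
        refine hwit (τ.symm ⟨0, hlen⟩) β.headI ?_ h0lt
        rw [show τ (τ.symm ⟨0, hlen⟩) = ⟨0, hlen⟩ from τ.apply_symm_apply _]
        rw [get_zero_eq_headI β hlen]
        have h0' : (0 : ℤ) ≤ (((τ.symm ⟨0, hlen⟩ : Fin β.length) : ℕ) : ℤ) := by positivity
        have hz : (((⟨0, hlen⟩ : Fin β.length) : ℕ) : ℤ) = 0 := rfl
        rw [hz]
        omega
    have hsp : hm m ∈ Wspan k β.sum (wgt ↑β) β.headI := Submodule.subset_span hgen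
    rcases Int.units_eq_one_or (Equiv.Perm.sign τ) with hs' | hs' <;> rw [hs']
    · simpa using hsp
    · simpa using Submodule.neg_mem _ hsp

/-! ### kSplit facts -/

lemma hProd_append (l₁ l₂ : List ℕ) : hProd (l₁ ++ l₂) = hProd l₁ * hProd l₂ := by
  simp [hProd]

lemma kSplitAux_congr (k : ℕ) : ∀ f₁ f₂ : ℕ, ∀ l : List ℕ,
    l.length ≤ f₁ → l.length ≤ f₂ → kSplitAux k f₁ l = kSplitAux k f₂ l := by
  intro f₁
  induction f₁ with
  | zero =>
    intro f₂ l h1 _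
    have : l = [] := List.eq_nil_of_length_eq_zero (Nat.le_zero.mp h1)
    subst this
    cases f₂ <;> rfl
  | succ g ih =>
    intro f₂ l h1 h2
    cases l with
    | nil => cases f₂ <;> rfl
    | cons a rest =>
      cases f₂ with
      | zero => simp at h2
      | succ g₂ =>
        simp only [kSplitAux]
        by_cases hcond : (a :: rest).length ≤ k + 1 - a ∨ k + 1 - a = 0
        · rw [if_pos hcond, if_pos hcond]
        · rw [if_neg hcond, if_neg hcond]
          push_neg at hcond
          have hlen : ((a :: rest).drop (k + 1 - a)).length ≤ g := by
            rw [List.length_drop]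
            simp only [List.length_cons] at h1 ⊢
            omega
          have hlen₂ : ((a :: rest).drop (k + 1 - a)).length ≤ g₂ := by
            rw [List.length_drop]
            simp only [List.length_cons] at h2 ⊢
            omega
          rw [ih g₂ _ hlen hlen₂]

lemma kSplit_eq_single (k a : ℕ) (rest : List ℕ) (h : (a :: rest).length ≤ k + 1 - a) :
    kSplit k (a :: rest) = [a :: rest] := by
  unfold kSplit
  show kSplitAux k (rest.length + 1) (a :: rest) = _
  simp only [kSplitAux]
  rw [if_pos (Or.inl h)]

lemma kSplit_eq_cons (k a : ℕ) (rest : List ℕ) (h : ¬ (a :: rest).length ≤ k + 1 - a)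
    (ha : k + 1 - a ≠ 0) :
    kSplit k (a :: rest)
      = (a :: rest).take (k + 1 - a) :: kSplit k ((a :: rest).drop (k + 1 - a)) := by
  unfold kSplit
  show kSplitAux k (rest.length + 1) (a :: rest) = _
  simp only [kSplitAux]
  rw [if_neg (by rintro (h' | h') <;> [exact h h'; exact ha h'])]
  congr 1
  refine kSplitAux_congr k rest.length _ _ ?_ le_rfl
  rw [List.length_drop]
  simp only [List.length_cons]
  omega

lemma Gk_eq_schur (k a : ℕ) (rest : List ℕ) (h : (a :: rest).length ≤ k + 1 - a) :
    Gk k (a :: rest) = schur (a :: rest) := by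
  unfold Gk
  rw [kSplit_eq_single k a rest h]
  simp

lemma Gk_eq_mul (k a : ℕ) (rest : List ℕ) (h : ¬ (a :: rest).length ≤ k + 1 - a)
    (ha : k + 1 - a ≠ 0) :
    Gk k (a :: rest)
      = schur ((a :: rest).take (k + 1 - a)) * Gk k ((a :: rest).drop (k + 1 - a)) := by
  unfold Gk
  rw [kSplit_eq_cons k a rest h ha]
  simp

/-! ### Products of spans -/

lemma OKm_add {k : ℕ} {m₁ m₂ : Multiset ℕ} (h₁ : OKm k m₁) (h₂ : OKm k m₂) :
    OKm k (m₁ + m₂) := by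
  intro x hx
  rcases Multiset.mem_add.mp hx with h | h
  · exact h₁ x h
  · exact h₂ x h

lemma W_mul_gen {k n w b : ℕ} {f : SymFn} (hf : f ∈ Wspan k n w b) (m₀ : Multiset ℕ)
    (h₀ : OKm k m₀) : f * hm m₀ ∈ Wspan k (n + m₀.sum) (w + wgt m₀) b := by
  refine Submodule.span_induction ?_ ?_ ?_ ?_ hf
  · rintro x ⟨m, hOK, hsum, hwgt, ⟨y, hy, hby⟩, rfl⟩
    rw [← hm_add]
    refine Submodule.subset_span ⟨m + m₀, OKm_add hOK h₀, ?_, ?_, ⟨y, Multiset.mem_add.mpr (Or.inl hy), hby⟩, rfl⟩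
    · rw [Multiset.sum_add, hsum]
    · rw [wgt_add]
      omega
  · rw [zero_mul]
    exact Submodule.zero_mem _
  · intro x y _ _ ihx ihy
    rw [add_mul]
    exact Submodule.add_mem _ ihx ihy
  · intro q x _ ihx
    rw [smul_mul_assoc]
    exact Submodule.smul_mem _ _ ihx

lemma gen_mul_W {k n w b b₀ : ℕ} (m₀ : Multiset ℕ) (h₀ : OKm k m₀) (hw : ∃ x ∈ m₀, b₀ ≤ x)
    {f : SymFn} (hf : f ∈ Wspan k n w b) :
    hm m₀ * f ∈ Wspan k (m₀.sum + n) (wgt m₀ + w) b₀ := by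
  refine Submodule.span_induction ?_ ?_ ?_ ?_ hf
  · rintro x ⟨m, hOK, hsum, hwgt, _, rfl⟩
    rw [← hm_add]
    rcases hw with ⟨y, hy, hby⟩
    refine Submodule.subset_span ⟨m₀ + m, OKm_add h₀ hOK, ?_, ?_, ⟨y, Multiset.mem_add.mpr (Or.inl hy), hby⟩, rfl⟩
    · rw [Multiset.sum_add, hsum]
    · rw [wgt_add]
      omega
  · rw [mul_zero]
    exact Submodule.zero_mem _
  · intro x y _ _ ihx ihy
    rw [mul_add]
    exact Submodule.add_mem _ ihx ihy
  · intro q x _ ihx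
    rw [mul_smul_comm]
    exact Submodule.smul_mem _ _ ihx

lemma W_mul_W {k n w b n' w' b' : ℕ} {f g : SymFn} (hf : f ∈ Wspan k n w b)
    (hg : g ∈ Wspan k n' w' b') : f * g ∈ Wspan k (n + n') (w + w') b := by
  refine Submodule.span_induction (p := fun x _ => x * g ∈ Wspan k (n + n') (w + w') b)
    ?_ ?_ ?_ ?_ hf
  · rintro x ⟨m, hOK, hsum, hwgt, ⟨y, hy, hby⟩, rfl⟩
    show hm m * g ∈ Wspan k (n + n') (w + w') b
    refine Submodule.span_induction (p := fun z _ => hm m * z ∈ Wspan k (n + n') (w + w') b)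
      ?_ ?_ ?_ ?_ hg
    · rintro z ⟨m', hOK', hsum', hwgt', _, rfl⟩
      show hm m * hm m' ∈ Wspan k (n + n') (w + w') b
      rw [← hm_add]
      refine Submodule.subset_span ⟨m + m', OKm_add hOK hOK', ?_, ?_,
        ⟨y, Multiset.mem_add.mpr (Or.inl hy), hby⟩, rfl⟩
      · rw [Multiset.sum_add, hsum, hsum']
      · rw [wgt_add]
        omega
    · show hm m * 0 ∈ Wspan k (n + n') (w + w') b
      rw [mul_zero]
      exact Submodule.zero_mem _
    · intro z₁ z₂ _ _ ih₁ ih₂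
      show hm m * (z₁ + z₂) ∈ Wspan k (n + n') (w + w') b
      rw [mul_add]
      exact Submodule.add_mem _ ih₁ ih₂
    · intro q z _ ih
      show hm m * (q • z) ∈ Wspan k (n + n') (w + w') b
      rw [mul_smul_comm]
      exact Submodule.smul_mem _ _ ih
  · show (0 : SymFn) * g ∈ Wspan k (n + n') (w + w') b
    rw [zero_mul]
    exact Submodule.zero_mem _
  · intro x y _ _ ihx ihy
    show (x + y) * g ∈ Wspan k (n + n') (w + w') b
    rw [add_mul]
    exact Submodule.add_mem _ ihx ihy
  · intro q x _ ihx
    show (q • x) * g ∈ Wspan k (n + n') (w + w') b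
    rw [smul_mul_assoc]
    exact Submodule.smul_mem _ _ ihx

/-- Expansion of `Gk` in the `h`-basis: unitriangularity with respect to the weight. -/
lemma Gk_sub_mem (k : ℕ) (hk : 1 ≤ k) :
    ∀ (N : ℕ) (l : List ℕ), l.length ≤ N → l.Pairwise (· ≥ ·) → (∀ x ∈ l, 0 < x) →
    KBounded k l → l ≠ [] →
    Gk k l - hProd l ∈ Wspan k l.sum (wgt ↑l) l.headI := by
  intro N
  induction N with
  | zero =>
    intro l hlen _ _ _ hne
    exact absurd (List.eq_nil_of_length_eq_zero (Nat.le_zero.mp hlen)) hne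
  | succ N ih =>
    intro l hlen hs hpos hkb hne
    obtain ⟨a, rest, rfl⟩ : ∃ a rest, l = a :: rest := by
      cases l with
      | nil => exact absurd rfl hne
      | cons a rest => exact ⟨a, rest, rfl⟩
    have ha_pos : 0 < a := hpos a (List.mem_cons_self)
    have ha_k : a ≤ k := hkb a (List.mem_cons_self)
    by_cases hc : (a :: rest).length ≤ k + 1 - a
    · rw [Gk_eq_schur k a rest hc]
      refine schur_sub_mem k _ hs hpos hne ?_
      unfold mainHook
      simp only [List.headI, List.length_cons] at *
      omega
    · have ht0 : k + 1 - a ≠ 0 := by omega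
      rw [Gk_eq_mul k a rest hc ht0]
      set t := k + 1 - a with htdef
      set B := (a :: rest).take t with hBdef
      set C := (a :: rest).drop t with hCdef
      have hBC : B ++ C = a :: rest := List.take_append_drop t (a :: rest)
      have htlen : t ≤ (a :: rest).length := by omega
      have hlenB : B.length = t := by
        rw [hBdef, List.length_take]
        omega
      have hlenC : C.length ≤ N := by
        rw [hCdef, List.length_drop]
        simp only [List.length_cons] at hlen ⊢
        omega
      have hCne : C ≠ [] := by
        have : 0 < C.length := by
          rw [hCdef, List.length_drop]
          omega
        exact List.ne_nil_of_length_pos this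
      have hBne : B ≠ [] := by
        have : 0 < B.length := by omega
        exact List.ne_nil_of_length_pos this
      have hsB : B.Pairwise (· ≥ ·) := List.Pairwise.sublist (List.take_sublist t _) hs
      have hsC : C.Pairwise (· ≥ ·) := List.Pairwise.sublist (List.drop_sublist t _) hs
      have hposB : ∀ x ∈ B, 0 < x := fun x hx => hpos x ((List.take_sublist t _).mem hx)
      have hposC : ∀ x ∈ C, 0 < x := fun x hx => hpos x ((List.drop_sublist t _).mem hx)
      have hkbB : KBounded k B := fun x hx => hkb x ((List.take_sublist t _).mem hx)
      have hkbC : KBounded k C := fun x hx => hkb x ((List.drop_sublist t _).mem hx)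
      have hBheadI : B.headI = a := by
        obtain ⟨t', ht'⟩ : ∃ t', t = t' + 1 := ⟨t - 1, by omega⟩
        rw [hBdef, ht', List.take_succ_cons]
        rfl
      have hBmh : mainHook B ≤ k := by
        unfold mainHook
        rw [hBheadI, hlenB]
        omega
      have r₁mem := schur_sub_mem k B hsB hposB hBne hBmh
      have r₂mem := ih C hlenC hsC hposC hkbC hCne
      have hOKB : OKm k (↑B : Multiset ℕ) := fun x hx => ⟨hposB x hx, hkbB x hx⟩
      have hOKC : OKm k (↑C : Multiset ℕ) := fun x hx => ⟨hposC x hx, hkbC x hx⟩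
      have haB : a ∈ B := by
        rw [← hBheadI]
        cases hB : B with
        | nil => exact absurd hB hBne
        | cons x xs => simp
      have hsum : (a :: rest).sum = B.sum + C.sum := by
        rw [← hBC, List.sum_append]
      have hwgtl : wgt ↑(a :: rest) = wgt ↑B + wgt ↑C := by
        rw [← hBC]
        rw [show ((B ++ C : List ℕ) : Multiset ℕ) = ↑B + ↑C from rfl, wgt_add]
      have hmsB : (↑B : Multiset ℕ).sum = B.sum := by simp
      have hmsC : (↑C : Multiset ℕ).sum = C.sum := by simp
      have hwB : wgt (↑B : Multiset ℕ) < wgt (↑B : Multiset ℕ) + 1 := by omega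
      -- the three cross terms
      have m1 : hProd B * (Gk k C - hProd C) ∈ Wspan k (B.sum + C.sum) (wgt ↑B + wgt ↑C) a := by
        rw [← hm_coe]
        have := gen_mul_W (b₀ := a) (↑B : Multiset ℕ) hOKB ⟨a, by exact_mod_cast haB, le_rfl⟩ r₂mem
        rwa [hmsB] at this
      have m2 : (schur B - hProd B) * hProd C
          ∈ Wspan k (B.sum + C.sum) (wgt ↑B + wgt ↑C) B.headI := by
        rw [← hm_coe]
        have := W_mul_gen r₁mem (↑C : Multiset ℕ) hOKC
        rwa [hmsC] at this
      have m3 : (schur B - hProd B) * (Gk k C - hProd C)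
          ∈ Wspan k (B.sum + C.sum) (wgt ↑B + wgt ↑C) B.headI := W_mul_W r₁mem r₂mem
      have hidentity : schur B * Gk k C - hProd (a :: rest)
          = hProd B * (Gk k C - hProd C) + (schur B - hProd B) * hProd C
            + (schur B - hProd B) * (Gk k C - hProd C) := by
        rw [← hBC, hProd_append]
        ring
      rw [show (a :: rest).headI = a from rfl, hidentity, hsum, hwgtl]
      rw [hBheadI] at m2 m3
      exact Submodule.add_mem _ (Submodule.add_mem _ m1 m2) m3

/-! ### From `h`-monomials to the `Gk` basis -/

lemma wgt_le_sq (m : Multiset ℕ) : wgt m ≤ m.sum * m.sum := by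
  induction m using Multiset.induction with
  | empty => simp [wgt]
  | cons a s ih =>
    rw [wgt_cons, Multiset.sum_cons]
    nlinarith [Multiset.sum_nonneg (s := s) (fun x _ => Nat.zero_le x)]

/-- Sort a multiset into a weakly decreasing list. -/
def sortD (m : Multiset ℕ) : List ℕ := (m.sort (· ≤ ·)).reverse

lemma sortD_coe (m : Multiset ℕ) : ((sortD m : List ℕ) : Multiset ℕ) = m := by
  unfold sortD
  rw [Multiset.coe_reverse, Multiset.sort_eq]

lemma sortD_sorted (m : Multiset ℕ) : (sortD m).Pairwise (· ≥ ·) := by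
  unfold sortD
  rw [List.pairwise_reverse]
  exact Multiset.pairwise_sort (r := (· ≤ ·)) (s := m)

lemma sortD_mem {m : Multiset ℕ} {x : ℕ} : x ∈ sortD m ↔ x ∈ m := by
  rw [← Multiset.mem_coe, sortD_coe]

lemma hm_mem_Gspan (k a : ℕ) (hk : 1 ≤ k) :
    ∀ (d : ℕ) (m : Multiset ℕ), OKm k m → (∃ x ∈ m, a < x) →
    m.sum * m.sum + 1 - wgt m ≤ d → hm m ∈ Gspan k a := by
  intro d
  induction d with
  | zero =>
    intro m _ _ hd
    have := wgt_le_sq m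
    omega
  | succ d ih =>
    intro m hOK hw hd
    set ν := sortD m with hν
    have hco : ((ν : List ℕ) : Multiset ℕ) = m := sortD_coe m
    have hsort : ν.Pairwise (· ≥ ·) := sortD_sorted m
    have hpos : ∀ x ∈ ν, 0 < x := fun x hx => (hOK x (sortD_mem.mp hx)).1
    have hkb : KBounded k ν := fun x hx => (hOK x (sortD_mem.mp hx)).2
    rcases hw with ⟨y, hy, hay⟩
    have hyν : y ∈ ν := sortD_mem.mpr hy
    have hne : ν ≠ [] := fun h => by
      rw [h] at hyν
      simp at hyν
    have hheadI : a < ν.headI := lt_of_lt_of_le hay (le_headI hsort hyν)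
    have hGk := Gk_sub_mem k hk ν.length ν le_rfl hsort hpos hkb hne
    have hsum : ν.sum = m.sum := by
      rw [← hco]
      simp
    have hmhm : hProd ν = hm m := by
      rw [← hm_coe, hco]
    rw [hsum, hco, hmhm] at hGk
    have hGmem : Gk k ν ∈ Gspan k a :=
      Submodule.subset_span ⟨ν, ⟨hsort, hpos⟩, hkb, hheadI, rfl⟩
    have hWle : Wspan k m.sum (wgt m) ν.headI ≤ Gspan k a := by
      refine Submodule.span_le.mpr ?_
      rintro x ⟨m', hOK', hsum', hwgt', ⟨z, hz, hbz⟩, rfl⟩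
      refine ih m' hOK' ⟨z, hz, lt_of_lt_of_le hheadI hbz⟩ ?_
      have := wgt_le_sq m'
      rw [hsum']
      omega
    have : hm m = Gk k ν - (Gk k ν - hm m) := by ring
    rw [this]
    exact Submodule.sub_mem _ hGmem (hWle hGk)

lemma Hspan_le_Gspan (k a : ℕ) (hk : 1 ≤ k) : Hspan k a ≤ Gspan k a := by
  refine Submodule.span_le.mpr ?_
  rintro x ⟨m, hOK, hw, rfl⟩
  exact hm_mem_Gspan k a hk (m.sum * m.sum + 1 - wgt m) m hOK hw le_rfl

/-! ### Cofactor expansion of the Jacobi–Trudi determinant along the first row -/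

lemma hh_mul_S0 {k a b : ℕ} (hb : a < b) (hbk : b ≤ k) {f : SymFn} (hf : f ∈ S0 k) :
    hh b * f ∈ Hspan k a := by
  refine Submodule.span_induction ?_ ?_ ?_ ?_ hf
  · rintro x ⟨m, hOK, rfl⟩
    show hh b * hm m ∈ Hspan k a
    rw [← hm_cons]
    refine Submodule.subset_span ⟨b ::ₘ m, ?_, ⟨b, Multiset.mem_cons_self b m, hb⟩, rfl⟩
    intro x hx
    rcases Multiset.mem_cons.mp hx with h | h
    · subst h
      omega
    · exact hOK x h
  · show hh b * 0 ∈ Hspan k a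
    rw [mul_zero]
    exact Submodule.zero_mem _
  · intro x y _ _ ihx ihy
    show hh b * (x + y) ∈ Hspan k a
    rw [mul_add]
    exact Submodule.add_mem _ ihx ihy
  · intro q x _ ih
    show hh b * (q • x) ∈ Hspan k a
    rw [mul_smul_comm]
    exact Submodule.smul_mem _ _ ih

lemma neg_one_pow_mul_mem {P : Submodule ℚ SymFn} (m : ℕ) {f : SymFn} (hf : f ∈ P) :
    (-1 : SymFn) ^ m * f ∈ P := by
  rcases Nat.even_or_odd m with h | h
  · rw [h.neg_one_pow, one_mul]
    exact hf
  · rw [h.neg_one_pow, neg_one_mul]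
    exact Submodule.neg_mem _ hf

lemma schur_nil : schur [] = 1 := by
  haveI : IsEmpty (Fin (List.length ([] : List ℕ))) := Fin.isEmpty
  exact Matrix.det_isEmpty

lemma schur_singleton (a : ℕ) : schur [a] = hh a := by
  rw [show schur [a] = (Matrix.of fun i j : Fin 1 =>
      hZ ((([a].get i : ℕ) : ℤ) - ((i : ℕ) : ℤ) + ((j : ℕ) : ℤ))).det from rfl,
    Matrix.det_fin_one]
  show hZ (((a : ℕ) : ℤ) - ((0 : ℕ) : ℤ) + ((0 : ℕ) : ℤ)) = hh a
  rw [show ((a : ℕ) : ℤ) - ((0 : ℕ) : ℤ) + ((0 : ℕ) : ℤ) = ((a : ℕ) : ℤ) by push_cast; ring]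
  exact hZ_ofNat a

lemma cofactor (k a : ℕ) (rest : List ℕ) (ha1 : 1 ≤ a) (hrest : ∀ x ∈ rest, x ≤ a)
    (hak : a + rest.length ≤ k) :
    schur (a :: rest) - hh a * schur rest ∈ Hspan k a := by
  classical
  have hdet : schur (a :: rest) = (Matrix.of fun i j : Fin (rest.length + 1) =>
      hZ ((((a :: rest).get i : ℕ) : ℤ) - ((i : ℕ) : ℤ) + ((j : ℕ) : ℤ))).det := rfl
  set M := Matrix.of fun i j : Fin (rest.length + 1) =>
      hZ ((((a :: rest).get i : ℕ) : ℤ) - ((i : ℕ) : ℤ) + ((j : ℕ) : ℤ)) with hM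
  rw [hdet, Matrix.det_succ_row_zero, Fin.sum_univ_succ]
  have h0term : (-1 : SymFn) ^ (((0 : Fin (rest.length + 1)) : ℕ)) * M 0 0
      * (M.submatrix Fin.succ (Fin.succAbove 0)).det = hh a * schur rest := by
    have hM00 : M 0 0 = hh a := by
      have h : M 0 0 = hZ (((a : ℕ) : ℤ) - ((0 : ℕ) : ℤ) + ((0 : ℕ) : ℤ)) := rfl
      rw [h, show ((a : ℕ) : ℤ) - ((0 : ℕ) : ℤ) + ((0 : ℕ) : ℤ) = ((a : ℕ) : ℤ) by push_cast; ring]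
      exact hZ_ofNat a
    have hminor : M.submatrix Fin.succ (Fin.succAbove 0) = Matrix.of fun i j : Fin rest.length =>
        hZ (((rest.get i : ℕ) : ℤ) - ((i : ℕ) : ℤ) + ((j : ℕ) : ℤ)) := by
      refine Matrix.ext fun i j => ?_
      rw [Matrix.submatrix_apply, Fin.succAbove_zero]
      show hZ (((rest.get i : ℕ) : ℤ) - ((i.succ : ℕ) : ℤ) + ((j.succ : ℕ) : ℤ)) = _
      rw [show ((rest.get i : ℕ) : ℤ) - ((i.succ : ℕ) : ℤ) + ((j.succ : ℕ) : ℤ)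
          = ((rest.get i : ℕ) : ℤ) - ((i : ℕ) : ℤ) + ((j : ℕ) : ℤ) by
        push_cast [Fin.val_succ]
        ring]
      rfl
    rw [hM00, hminor]
    show (-1 : SymFn) ^ (0 : ℕ) * hh a * schur rest = hh a * schur rest
    rw [pow_zero, one_mul]
  rw [h0term, add_sub_cancel_left]
  refine Submodule.sum_mem _ fun j _ => ?_
  set b := a + (j : ℕ) + 1 with hbdef
  have hb : a < b := by omega
  have hbk : b ≤ k := by
    have := j.isLt
    omega
  have hM0j : M 0 j.succ = hh b := by
    have h : M 0 j.succ = hZ (((a : ℕ) : ℤ) - ((0 : ℕ) : ℤ) + ((j.succ : ℕ) : ℤ)) := rfl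
    rw [h, show ((a : ℕ) : ℤ) - ((0 : ℕ) : ℤ) + ((j.succ : ℕ) : ℤ) = ((b : ℕ) : ℤ) by
      push_cast [Fin.val_succ, hbdef]
      ring]
    exact hZ_ofNat b
  have hminor : (M.submatrix Fin.succ (Fin.succAbove j.succ)).det ∈ S0 k := by
    have hform : M.submatrix Fin.succ j.succ.succAbove = Matrix.of fun i c : Fin rest.length =>
        hZ ((((a :: rest).get i.succ : ℕ) : ℤ) - ((i.succ : ℕ) : ℤ)
          + (((j.succ.succAbove c) : ℕ) : ℤ)) := rfl
    rw [hform]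
    refine det_mem_S0 k _ ?_
    intro i c
    have h1 : (a :: rest).get i.succ ≤ a := by
      show rest.get i ≤ a
      exact hrest _ (rest.get_mem _)
    have h2 : ((j.succ.succAbove c) : ℕ) < rest.length + 1 := (j.succ.succAbove c).isLt
    have h1' : (((a :: rest).get i.succ : ℕ) : ℤ) ≤ ((a : ℕ) : ℤ) := by exact_mod_cast h1
    have h2' : (((j.succ.succAbove c) : ℕ) : ℤ) < ((rest.length : ℕ) : ℤ) + 1 := by
      exact_mod_cast h2
    have h3 : (0 : ℤ) ≤ ((i.succ : ℕ) : ℤ) := by positivity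
    have hak' : ((a : ℕ) : ℤ) + ((rest.length : ℕ) : ℤ) ≤ ((k : ℕ) : ℤ) := by exact_mod_cast hak
    omega
  rw [hM0j, mul_assoc]
  exact neg_one_pow_mul_mem _ (hh_mul_S0 hb hbk hminor)

end KSAux

/-- If `λ` is a `k`-bounded partition with main hook-length
`h_M(λ) ≤ k`, then the `k`-Schur function equals the Schur function:
`s_λ^{(k)} = s_λ`.  (The `k`-Schur function is computed from any family `T` of
projection operators, all of which agree on `Λ^{(k)}`.) -/
theorem kSchur_eq_schur_of_mainHook_le (k : ℕ) (hk : 1 ≤ k)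
    (T : ℕ → (SymFn →ₗ[ℚ] SymFn)) (hT : ProjOps k T)
    (l : List ℕ) (hl : IsPartition l) (hb : KBounded k l)
    (hhook : mainHook l ≤ k) :
    kSchurWith T l = schur l := by
  revert hl hb hhook
  induction l with
  | nil =>
    intro _ _ _
    rw [show kSchurWith T [] = 1 from rfl, KSAux.schur_nil]
  | cons a rest ih =>
    intro hl hb hhook
    have hsrest : rest.Pairwise (· ≥ ·) := (List.pairwise_cons.mp hl.1).2
    have hrest_le : ∀ x ∈ rest, x ≤ a := fun x hx => List.rel_of_pairwise_cons hl.1 hx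
    have hposrest : ∀ x ∈ rest, 0 < x := fun x hx => hl.2 x (List.mem_cons_of_mem a hx)
    have hbrest : KBounded k rest := fun x hx => hb x (List.mem_cons_of_mem a hx)
    have ha1 : 1 ≤ a := hl.2 a (List.mem_cons_self)
    have hak : a ≤ k := hb a (List.mem_cons_self)
    have hlen : a + rest.length ≤ k := by
      unfold mainHook at hhook
      simp only [List.length_cons] at hhook
      have : (a :: rest).headI = a := rfl
      rw [this] at hhook
      omega
    have hhookrest : mainHook rest ≤ k := by
      unfold mainHook
      cases rest with
      | nil => simp
      | cons c cs =>
        have hca : c ≤ a := hrest_le c (List.mem_cons_self)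
        simp only [List.headI, List.length_cons] at *
        omega
    have ihres := ih ⟨hsrest, hposrest⟩ hbrest hhookrest
    rw [show kSchurWith T (a :: rest) = T a (schur [a] * kSchurWith T rest) from rfl, ihres,
      KSAux.schur_singleton a]
    have hsplit := KSAux.cofactor k a rest ha1 hrest_le hlen
    have hG : Gk k (a :: rest) = schur (a :: rest) :=
      KSAux.Gk_eq_schur k a rest (by simp only [List.length_cons]; omega)
    have hTG : T a (schur (a :: rest)) = schur (a :: rest) := by
      rw [← hG, hT a (a :: rest) hl hb]
      simp
    have hker : ∀ f ∈ KSAux.Hspan k a, T a f = 0 := by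
      intro f hf
      have hf' : f ∈ KSAux.Gspan k a := KSAux.Hspan_le_Gspan k a hk hf
      have hle : KSAux.Gspan k a ≤ LinearMap.ker (T a) := by
        refine Submodule.span_le.mpr ?_
        rintro x ⟨l', hl', hb', hhl', rfl⟩
        rw [SetLike.mem_coe, LinearMap.mem_ker, hT a l' hl' hb',
          if_neg (by omega : l'.headI ≠ a)]
      exact LinearMap.mem_ker.mp (hle hf')
    have hdecomp : hh a * schur rest
        = schur (a :: rest) + (hh a * schur rest - schur (a :: rest)) := by ring
    rw [hdecomp, map_add, hTG]
    have hmem : hh a * schur rest - schur (a :: rest) ∈ KSAux.Hspan k a := by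
      have := Submodule.neg_mem _ hsplit
      rwa [neg_sub] at this
    rw [hker _ hmem, add_zero]
end
end
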